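/- arXiv:2112.15179 — 3 statements merged into one kernel-verified Lean document; each statement's English description precedes it below -/
import Mathlib

section
/- Let N be an IMLN and let u_1, u_2 be elements of R_min(N). Then U(U(N, u_1), u_2) = U(U(N, u_2), u_1), i.e. unfolding at u_1 and then at u_2 yields the same IMLN as unfolding at u_2 and then at u_1. -/
/-- The data of a rooted binary internally multi-labelled phylogenetic network (IMLN):
a finite directed graph (no parallel arcs, since `Arc` is a relation) with a
distinguished root, leaf labels in `X` and reticulation/elementary labels in `Λ`. -/
structure IMLN (X : Type) (Λ : Type) : Type 1 where
  V : Type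
  fintypeV : Fintype V
  Arc : V → V → Prop
  root : V
  leafLabel : V → X
  retLabel : V → Λ

namespace IMLN

variable {X Λ : Type}

/-- In-degree of a node. -/
noncomputable def inDeg (N : IMLN X Λ) (v : N.V) : ℕ := {u : N.V | N.Arc u v}.ncard

/-- Out-degree of a node. -/
noncomputable def outDeg (N : IMLN X Λ) (v : N.V) : ℕ := {w : N.V | N.Arc v w}.ncard

/-- A leaf: a node of out-degree zero. -/
def IsLeaf (N : IMLN X Λ) (v : N.V) : Prop := N.outDeg v = 0

/-- A reticulation node: in-degree two and out-degree one. -/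
def IsRet (N : IMLN X Λ) (v : N.V) : Prop := N.inDeg v = 2 ∧ N.outDeg v = 1

/-- An elementary node: in-degree at most one and out-degree one. -/
def IsElem (N : IMLN X Λ) (v : N.V) : Prop := N.inDeg v ≤ 1 ∧ N.outDeg v = 1

/-- A tree node: a leaf, or a node of out-degree two (in particular not of out-degree one). -/
def IsTreeNode (N : IMLN X Λ) (v : N.V) : Prop := N.outDeg v ≠ 1

/-- An internal node: a non-leaf. -/
def IsInternal (N : IMLN X Λ) (v : N.V) : Prop := ¬ N.IsLeaf v

/-- Reachability by a (possibly trivial) directed path. -/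
def Reaches (N : IMLN X Λ) (u v : N.V) : Prop := Relation.ReflTransGen N.Arc u v

/-- Well-formedness: `N` is a rooted binary internally multi-labelled phylogenetic network. -/
structure IsIMLN (N : IMLN X Λ) : Prop where
  acyclic : ∀ v : N.V, ¬ Relation.TransGen N.Arc v v
  rootIn : N.inDeg N.root = 0
  rootOut : N.outDeg N.root = 1 ∨ N.outDeg N.root = 2
  uniqueRoot : ∀ v : N.V, N.inDeg v = 0 → v = N.root
  connected : ∀ v : N.V, N.Reaches N.root v
  degrees : ∀ v : N.V, v ≠ N.root →
      (N.inDeg v = 1 ∧ (N.outDeg v = 0 ∨ N.outDeg v = 1 ∨ N.outDeg v = 2)) ∨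
      (N.inDeg v = 2 ∧ N.outDeg v = 1)
  leafSurj : ∀ x : X, ∃ v : N.V, N.IsLeaf v ∧ N.leafLabel v = x
  retInj : ∀ u v : N.V, N.IsRet u → N.IsRet v → N.retLabel u = N.retLabel v → u = v
  retElemLabels : ∀ u v : N.V, N.IsRet u → N.IsElem v → N.retLabel u ≠ N.retLabel v

/-- An internally labelled phylogenetic network: an IMLN with no elementary nodes
whose leaf labelling and reticulation labelling are bijections. -/
def IsILPN (N : IMLN X Λ) : Prop :=
  N.IsIMLN ∧ (∀ v : N.V, ¬ N.IsElem v) ∧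
    (∀ x : X, ∃! v : N.V, N.IsLeaf v ∧ N.leafLabel v = x) ∧
    (∀ l : Λ, ∃! v : N.V, N.IsRet v ∧ N.retLabel v = l)

/-- `u ∈ R_min(N)`: a reticulation node with no reticulation node strictly below it. -/
def IsMinRet (N : IMLN X Λ) (u : N.V) : Prop :=
  N.IsRet u ∧ ∀ w : N.V, N.IsRet w → N.Reaches u w → w = u

/-- The sub-IMLN `N(u)` rooted at `u`. -/
noncomputable def sub (N : IMLN X Λ) (u : N.V) : IMLN X Λ where
  V := {v : N.V // N.Reaches u v}
  fintypeV := @Subtype.fintype _ _ (Classical.decPred _) N.fintypeV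
  Arc a b := N.Arc a.1 b.1
  root := ⟨u, Relation.ReflTransGen.refl⟩
  leafLabel a := N.leafLabel a.1
  retLabel a := N.retLabel a.1

/-- Isomorphism of IMLNs up to a permutation of the leaf labels and of the
internal labels: an arc-preserving bijection relating the labels via `σX`, `σΛ`. -/
def IsomUpTo (σX : Equiv.Perm X) (σΛ : Equiv.Perm Λ) (N₁ N₂ : IMLN X Λ) : Prop :=
  ∃ f : N₁.V ≃ N₂.V,
    (∀ u v : N₁.V, N₁.Arc u v ↔ N₂.Arc (f u) (f v)) ∧
    (∀ v : N₁.V, N₁.IsLeaf v → N₁.leafLabel v = σX (N₂.leafLabel (f v))) ∧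
    (∀ v : N₁.V, N₁.IsRet v ∨ N₁.IsElem v → N₁.retLabel v = σΛ (N₂.retLabel (f v)))

/-- Isomorphism of IMLNs: an arc-preserving bijection preserving leaf labels and
the labels of reticulation and elementary nodes. -/
def Isom (N₁ N₂ : IMLN X Λ) : Prop := IsomUpTo (Equiv.refl X) (Equiv.refl Λ) N₁ N₂

/-- `N'` is the unfolded IMLN `U(N,u)` of `N` at `u`: the arcs from the two parents
`v₁, v₂` of `u` to `u` are deleted, the subnetwork rooted at `u` is duplicated with
all its labels (`g` embeds `N` itself, `g'` embeds the new copy of the subnetwork),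
and arcs from `v₁` to one copy of `u` and from `v₂` to the other copy are added. -/
def IsUnfoldAt (N N' : IMLN X Λ) (u : N.V) : Prop :=
  ∃ g g' : N.V → N'.V,
    Function.Injective g ∧
    (∀ a b : N.V, N.Reaches u a → N.Reaches u b → g' a = g' b → a = b) ∧
    (∀ a b : N.V, N.Reaches u b → g a ≠ g' b) ∧
    (∀ x : N'.V, (∃ a, x = g a) ∨ (∃ a, N.Reaches u a ∧ x = g' a)) ∧
    g N.root = N'.root ∧
    (∀ a : N.V, N'.leafLabel (g a) = N.leafLabel a) ∧
    (∀ a : N.V, N'.retLabel (g a) = N.retLabel a) ∧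
    (∀ a : N.V, N.Reaches u a → N'.leafLabel (g' a) = N.leafLabel a) ∧
    (∀ a : N.V, N.Reaches u a → N'.retLabel (g' a) = N.retLabel a) ∧
    ∃ v₁ v₂ : N.V, v₁ ≠ v₂ ∧ N.Arc v₁ u ∧ N.Arc v₂ u ∧
      ∀ x y : N'.V, N'.Arc x y ↔
        ((∃ a b : N.V, N.Arc a b ∧ b ≠ u ∧ x = g a ∧ y = g b) ∨
         (∃ a b : N.V, N.Reaches u a ∧ N.Reaches u b ∧ N.Arc a b ∧ x = g' a ∧ y = g' b) ∨
         (x = g v₁ ∧ y = g u) ∨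
         (x = g v₂ ∧ y = g' u))

/-- One unfolding step, performed at the (necessarily unique) reticulation node
of `N` labelled `l`, which is required to lie in `R_min(N)`. -/
def UnfoldStep (N N' : IMLN X Λ) (l : Λ) : Prop :=
  ∃ u : N.V, N.IsMinRet u ∧ N.retLabel u = l ∧ IsUnfoldAt N N' u

/-- `IsUnfoldSeq N ls M`: `M` is obtained from `N` by the sequence of unfoldings at
the reticulation nodes labelled by the list `ls` (each minimal at its turn);
this encodes the notion of a compatible sequence and its associated sequence of IMLNs. -/
inductive IsUnfoldSeq : IMLN X Λ → List Λ → IMLN X Λ → Prop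
  | nil (N : IMLN X Λ) : IsUnfoldSeq N [] N
  | cons {N M M' : IMLN X Λ} {l : Λ} {ls : List Λ} :
      UnfoldStep N M l → IsUnfoldSeq M ls M' → IsUnfoldSeq N (l :: ls) M'

/-- A list of reticulation nodes of `N` is a compatible sequence if the associated
sequence of unfoldings exists. -/
def Compatible (N : IMLN X Λ) (us : List N.V) : Prop :=
  (∀ u ∈ us, N.IsRet u) ∧ ∃ M : IMLN X Λ, IsUnfoldSeq N (us.map N.retLabel) M

/-- The order `≤_E` on elementary nodes: `a ≤_E b` iff there are elementary nodes
`a', b'` with the same labels as `a, b` and a directed path from `b` to `a`. -/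
def LE_E (N : IMLN X Λ) (a b : N.V) : Prop :=
  N.IsElem a ∧ N.IsElem b ∧
    ∃ a' b' : N.V, N.IsElem a' ∧ N.IsElem b' ∧
      N.retLabel a' = N.retLabel a ∧ N.retLabel b' = N.retLabel b ∧ N.Reaches b a

/-- `a ∈ E_max(N)`: a maximal elementary node under `≤_E`. -/
def IsEMax (N : IMLN X Λ) (a : N.V) : Prop :=
  N.IsElem a ∧ ∀ b : N.V, N.LE_E a b → b = a

/-- `N'` is the folded IMLN `F(N,u)` of `N` at `u ∈ E_max(N)`: choosing the other
node `v ∈ E_max(N)` with the same label and isomorphic rooted subnetwork, the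
subnetwork rooted at `v` and the arc from the parent `vp` of `v` to `v` are deleted
and the arc `(vp, u)` is added. -/
def IsFoldAt (N N' : IMLN X Λ) (u : N.V) : Prop :=
  N.IsEMax u ∧
  ∃ v : N.V, v ≠ u ∧ N.IsEMax v ∧ N.retLabel v = N.retLabel u ∧
    Isom (N.sub u) (N.sub v) ∧
    ∃ vp : N.V, N.Arc vp v ∧
      ∃ h : N'.V → N.V,
        Function.Injective h ∧
        (∀ x : N'.V, ¬ N.Reaches v (h x)) ∧
        (∀ a : N.V, ¬ N.Reaches v a → ∃ x, h x = a) ∧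
        h N'.root = N.root ∧
        (∀ x : N'.V, N'.leafLabel x = N.leafLabel (h x)) ∧
        (∀ x : N'.V, N'.retLabel x = N.retLabel (h x)) ∧
        (∀ x y : N'.V, N'.Arc x y ↔ (N.Arc (h x) (h y) ∨ (h x = vp ∧ h y = u)))

/-- `IsFoldSeq N ls M`: `M` is obtained from `N` by successively folding at nodes
carrying the labels in the list `ls`. -/
inductive IsFoldSeq : IMLN X Λ → List Λ → IMLN X Λ → Prop
  | nil (N : IMLN X Λ) : IsFoldSeq N [] N
  | cons {N M M' : IMLN X Λ} {l : Λ} {ls : List Λ} :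
      (∃ u : N.V, N.retLabel u = l ∧ IsFoldAt N M u) → IsFoldSeq M ls M' →
      IsFoldSeq N (l :: ls) M'

/-- Pseudo-network condition (i): no reticulation node descends from an elementary node. -/
def PseudoCondI (N : IMLN X Λ) : Prop :=
  ∀ e r : N.V, N.IsElem e → N.IsRet r → ¬ N.Reaches e r

/-- Pseudo-network condition (ii): every node of `E_max(N)` has a mate with the
same label and isomorphic rooted subnetwork. -/
def PseudoCondII (N : IMLN X Λ) : Prop :=
  ∀ u : N.V, N.IsEMax u → ∃ v : N.V, v ≠ u ∧ N.IsEMax v ∧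
    N.retLabel v = N.retLabel u ∧ Isom (N.sub u) (N.sub v)

/-- Fuelled version of the recursive definition of pseudo-networks. -/
def IsPseudoN : ℕ → IMLN X Λ → Prop
  | 0, N => PseudoCondI N ∧ PseudoCondII N
  | n + 1, N => PseudoCondI N ∧ PseudoCondII N ∧
      ∀ (u : N.V) (N' : IMLN X Λ), N.IsEMax u → IsFoldAt N N' u → IsPseudoN n N'

/-- `N` is a pseudo-network: conditions (i) and (ii) hold, and every folding at a
node of `E_max(N)` yields again a pseudo-network. -/
def IsPseudo (N : IMLN X Λ) : Prop := ∀ n : ℕ, IsPseudoN n N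

/-- The polynomial ring `ℤ[x₁,…,xₙ,λ₁,…,λᵣ,y]`, with one variable for each leaf
label, one for each internal label, and one extra variable `y`. -/
abbrev PolyRing (X Λ : Type) := MvPolynomial (X ⊕ (Λ ⊕ Unit)) ℤ

/-- The variable `x_i`. -/
noncomputable def xVar (x : X) : PolyRing X Λ := MvPolynomial.X (Sum.inl x)

/-- The variable `λ_i`. -/
noncomputable def lVar (l : Λ) : PolyRing X Λ := MvPolynomial.X (Sum.inr (Sum.inl l))

/-- The variable `y`. -/
noncomputable def yVar : PolyRing X Λ := MvPolynomial.X (Sum.inr (Sum.inr ()))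

/-- `P` is the polynomial assignment `p` on the nodes of `N`:
`p(u) = φ(u)` on leaves, `p(u) = y + p(v₁)p(v₂)` on internal tree nodes with
children `v₁ ≠ v₂`, and `p(u) = ℓ(u)·p(v)` on nodes with a single child `v`. -/
def IsPolyAssignment (N : IMLN X Λ) (P : N.V → PolyRing X Λ) : Prop :=
  (∀ v : N.V, N.IsLeaf v → P v = xVar (N.leafLabel v)) ∧
  (∀ v v₁ v₂ : N.V, v₁ ≠ v₂ → N.Arc v v₁ → N.Arc v v₂ →
      P v = yVar + P v₁ * P v₂) ∧
  (∀ v w : N.V, N.outDeg v = 1 → N.Arc v w →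
      P v = lVar (N.retLabel v) * P w)

/-- The action `σ·p` of a permutation of the labels (fixing `X` and `Λ` setwise,
and fixing `y`) on polynomials, by renaming variables. -/
noncomputable def permRename (σX : Equiv.Perm X) (σΛ : Equiv.Perm Λ) (p : PolyRing X Λ) : PolyRing X Λ :=
  MvPolynomial.rename (Sum.map (⇑σX) (Sum.map (⇑σΛ) id)) p

/-- A strong path: a directed path all of whose intermediate nodes are elementary
or reticulation nodes.  `StrongReach N u v` says that `u` is a strong ancestor of
`v` (equivalently, `v` is a strong descendant of `u`). -/
inductive StrongReach (N : IMLN X Λ) : N.V → N.V → Prop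
  | refl (u : N.V) : StrongReach N u u
  | single {u v : N.V} : N.Arc u v → StrongReach N u v
  | cons {u w v : N.V} : N.Arc u w → (N.IsElem w ∨ N.IsRet w) →
      StrongReach N w v → StrongReach N u v

/-- `N₁` and `N₂` are equivalent modulo strong paths, with respect to the label
permutation `(σX, σΛ)` and polynomial assignments `P₁`, `P₂`:
(i) `p(N₁) = σ·p(N₂)`; (ii) there is a bijection `f` between the tree nodes
preserving strong descendance; (iii) `p(u) = σ·p(f(u))` for every tree node `u`. -/
def EquivModSP (N₁ N₂ : IMLN X Λ) (P₁ : N₁.V → PolyRing X Λ) (P₂ : N₂.V → PolyRing X Λ)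
    (σX : Equiv.Perm X) (σΛ : Equiv.Perm Λ) : Prop :=
  P₁ N₁.root = permRename σX σΛ (P₂ N₂.root) ∧
  ∃ f : {v : N₁.V // N₁.IsTreeNode v} ≃ {v : N₂.V // N₂.IsTreeNode v},
    (∀ u v : {v : N₁.V // N₁.IsTreeNode v},
        StrongReach N₁ u.1 v.1 → StrongReach N₂ (f u).1 (f v).1) ∧
    (∀ u : {v : N₁.V // N₁.IsTreeNode v}, P₁ u.1 = permRename σX σΛ (P₂ (f u).1))

/-- A tree node `u` is separable if either both of its children are tree nodes, or
some tree node `u₁ ≠ u` is a strong ancestor of one child `c` of `u` and either is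
a strong ancestor of no other strong descendant of `u`, or is also a strong
ancestor of one of the strong descendants of `c`. -/
def IsSeparableNode (N : IMLN X Λ) (u : N.V) : Prop :=
  N.IsTreeNode u → ∀ v₁ v₂ : N.V, v₁ ≠ v₂ → N.Arc u v₁ → N.Arc u v₂ →
    ((N.IsTreeNode v₁ ∧ N.IsTreeNode v₂) ∨
      ∃ u₁ : N.V, u₁ ≠ u ∧ N.IsTreeNode u₁ ∧
        ∃ c : N.V, (c = v₁ ∨ c = v₂) ∧ StrongReach N u₁ c ∧
          ((∀ w : N.V, StrongReach N u w → w ≠ c → ¬ StrongReach N u₁ w) ∨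
           (∃ w : N.V, w ≠ c ∧ StrongReach N c w ∧ StrongReach N u₁ w)))

/-- A network is separable if all its tree nodes are separable. -/
def IsSeparable (N : IMLN X Λ) : Prop := ∀ u : N.V, N.IsSeparableNode u

/-- A (rooted binary) phylogenetic network: an IMLN with no elementary nodes, root
of out-degree two, and bijective leaf labelling (internal labels are ignored). -/
def IsPhyloNet (N : IMLN X Λ) : Prop :=
  N.IsIMLN ∧ (∀ v : N.V, ¬ N.IsElem v) ∧ N.outDeg N.root = 2 ∧
    (∀ x : X, ∃! v : N.V, N.IsLeaf v ∧ N.leafLabel v = x)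

/-- `N'` is obtained from `N` by a single cherry-reduction: either reducing a leaf
`b` of a cherry `{a,b}` (deleting `b` and suppressing the resulting elementary
node, the root moving to `a` if the common parent was the root), or cutting a
reticulated cherry `{a,b}` (deleting the arc `(p_a,p_b)` and suppressing the two
resulting elementary nodes). -/
def IsCherryReduce (N N' : IMLN X Λ) : Prop :=
  (∃ a b pa : N.V, a ≠ b ∧ N.IsLeaf a ∧ N.IsLeaf b ∧ N.Arc pa a ∧ N.Arc pa b ∧
    ∃ h : N'.V → N.V,
      Function.Injective h ∧
      (∀ x : N'.V, h x ≠ b ∧ h x ≠ pa) ∧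
      (∀ c : N.V, c ≠ b → c ≠ pa → ∃ x, h x = c) ∧
      (∀ x : N'.V, N'.leafLabel x = N.leafLabel (h x)) ∧
      ((pa = N.root ∧ h N'.root = a) ∨ (pa ≠ N.root ∧ h N'.root = N.root)) ∧
      (∀ x y : N'.V, N'.Arc x y ↔
        (N.Arc (h x) (h y) ∨ (N.Arc (h x) pa ∧ h y = a)))) ∨
  (∃ a b pa pb : N.V, a ≠ b ∧ N.IsLeaf a ∧ N.IsLeaf b ∧ N.Arc pa a ∧ N.Arc pb b ∧
    N.IsRet pb ∧ N.Arc pa pb ∧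
    ∃ h : N'.V → N.V,
      Function.Injective h ∧
      (∀ x : N'.V, h x ≠ pa ∧ h x ≠ pb) ∧
      (∀ c : N.V, c ≠ pa → c ≠ pb → ∃ x, h x = c) ∧
      (∀ x : N'.V, N'.leafLabel x = N.leafLabel (h x)) ∧
      ((pa = N.root ∧ h N'.root = a) ∨ (pa ≠ N.root ∧ h N'.root = N.root)) ∧
      (∀ x y : N'.V, N'.Arc x y ↔
        (N.Arc (h x) (h y) ∨ (N.Arc (h x) pa ∧ h y = a) ∨ (N.Arc (h x) pb ∧ h y = b))))

/-- A network is orchard if some sequence of cherry-reductions reduces it to a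
single vertex. -/
inductive IsOrchard : IMLN X Λ → Prop
  | single (N : IMLN X Λ) : (∀ v : N.V, v = N.root) → IsOrchard N
  | step {N N' : IMLN X Λ} : IsCherryReduce N N' → IsOrchard N' → IsOrchard N

/-- `ArcPath N u v n`: there is a directed path of length `n` from `u` to `v`. -/
inductive ArcPath (N : IMLN X Λ) : N.V → N.V → ℕ → Prop
  | refl (u : N.V) : ArcPath N u u 0
  | step {u w v : N.V} {n : ℕ} : N.Arc u w → ArcPath N w v n → ArcPath N u v (n + 1)

end IMLN
namespace IMLN

variable {X Λ : Type} {N : IMLN X Λ}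

/-- The canonical vertex type for the double unfolding. -/
abbrev TT (N : IMLN X Λ) (u₁ u₂ : N.V) : Type :=
  N.V ⊕ ({a : N.V // N.Reaches u₁ a} ⊕ {a : N.V // N.Reaches u₂ a})

/-- Collapse map back to `N`. -/
def ppi (N : IMLN X Λ) (u₁ u₂ : N.V) : TT N u₁ u₂ → N.V :=
  Sum.elim id (Sum.elim Subtype.val Subtype.val)

/-- Canonical arc relation of the double unfolding, with parents
`v₁ v₂` of `u₁` and `p₁ p₂` of `u₂`. -/
def RR (N : IMLN X Λ) (u₁ u₂ v₁ v₂ p₁ p₂ : N.V) :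
    TT N u₁ u₂ → TT N u₁ u₂ → Prop
  | Sum.inl a, Sum.inl b =>
      (N.Arc a b ∧ b ≠ u₁ ∧ b ≠ u₂) ∨ (a = v₁ ∧ b = u₁) ∨ (a = p₁ ∧ b = u₂)
  | Sum.inl a, Sum.inr (Sum.inl b) => a = v₂ ∧ b.1 = u₁
  | Sum.inl a, Sum.inr (Sum.inr b) => a = p₂ ∧ b.1 = u₂
  | Sum.inr (Sum.inl a), Sum.inr (Sum.inl b) => N.Arc a.1 b.1
  | Sum.inr (Sum.inr a), Sum.inr (Sum.inr b) => N.Arc a.1 b.1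
  | _, _ => False

lemma not_arc_back (hN : N.IsIMLN) {a b : N.V} (h : N.Reaches b a) (h' : N.Arc a b) :
    False :=
  hN.acyclic b (Relation.TransGen.tail' h h')

lemma ne_root_of_arc (hN : N.IsIMLN) {a b : N.V} (h : N.Arc a b) : b ≠ N.root := by
  haveI : Fintype N.V := N.fintypeV
  intro hb
  subst hb
  have h0 : ({u : N.V | N.Arc u N.root}).ncard = 0 := hN.rootIn
  rw [Set.ncard_eq_zero (Set.toFinite _)] at h0
  exact absurd (h0 ▸ (Set.mem_setOf_eq ▸ h : a ∈ {u : N.V | N.Arc u N.root}))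
    (Set.notMem_empty a)

/-- A non-`u` node of the subtree `N(u)` (for `u ∈ R_min`) has in-degree 1. -/
lemma indeg_one_in_subtree (hN : N.IsIMLN) {u b : N.V} (hu : N.IsMinRet u)
    (hb : N.Reaches u b) (hne : b ≠ u) : N.inDeg b = 1 := by
  obtain hb' | ⟨c, hc, hcb⟩ := Relation.ReflTransGen.cases_tail hb
  · exact absurd hb' hne
  rcases hN.degrees b (ne_root_of_arc hN hcb) with ⟨h1, _⟩ | ⟨h2, h3⟩
  · exact h1
  · exact absurd (hu.2 b ⟨h2, h3⟩ hb) hne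

/-- Parents of non-root nodes of the subtree `N(u)` lie in the subtree. -/
lemma parent_mem_subtree (hN : N.IsIMLN) {u a b : N.V} (hu : N.IsMinRet u)
    (hb : N.Reaches u b) (hne : b ≠ u) (h : N.Arc a b) : N.Reaches u a := by
  haveI : Fintype N.V := N.fintypeV
  obtain hb' | ⟨c, hc, hcb⟩ := Relation.ReflTransGen.cases_tail hb
  · exact absurd hb' hne
  have h1 : ({x : N.V | N.Arc x b}).ncard = 1 := indeg_one_in_subtree hN hu hb hne
  obtain ⟨d, hd⟩ := Set.ncard_eq_one.mp h1
  have had : a = d := by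
    have := hd ▸ (Set.mem_setOf_eq ▸ h : a ∈ {x : N.V | N.Arc x b}); exact this
  have hcd : c = d := by
    have := hd ▸ (Set.mem_setOf_eq ▸ hcb : c ∈ {x : N.V | N.Arc x b}); exact this
  rw [had, ← hcd]; exact hc

/-- Subtrees at distinct minimal reticulations are disjoint. -/
lemma subtree_disjoint (hN : N.IsIMLN) {u₁ u₂ : N.V} (h₁ : N.IsMinRet u₁)
    (h₂ : N.IsMinRet u₂) (hne : u₁ ≠ u₂) :
    ∀ a : N.V, N.Reaches u₂ a → N.Reaches u₁ a → False := by
  intro a ha2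
  induction ha2 with
  | refl => exact fun ha1 => hne (h₁.2 u₂ h₂.1 ha1).symm
  | @tail b c hb harc ih =>
      intro ha1
      by_cases hc : c = u₁
      · exact hne (h₂.2 u₁ h₁.1 (hc ▸ (hb.tail harc)))
      · exact ih (parent_mem_subtree hN h₁ ha1 hc harc)

lemma not_reaches_of_min (hN : N.IsIMLN) {u₁ u₂ : N.V} (h₁ : N.IsMinRet u₁)
    (h₂ : N.IsMinRet u₂) (hne : u₁ ≠ u₂) : ¬ N.Reaches u₂ u₁ :=
  fun h => hne (h₂.2 u₁ h₁.1 h)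

/-- A parent of `u₁` does not lie in the subtree of `u₂` (when `u₁ ≠ u₂`). -/
lemma parent_not_in_other (hN : N.IsIMLN) {u₁ u₂ v : N.V} (h₁ : N.IsMinRet u₁)
    (h₂ : N.IsMinRet u₂) (hne : u₁ ≠ u₂) (hv : N.Arc v u₁) : ¬ N.Reaches u₂ v :=
  fun h => not_reaches_of_min hN h₁ h₂ hne (h.tail hv)

end IMLN
namespace IMLN

variable {X Λ : Type} {N : IMLN X Λ}

/-- The swap of the two subtree summands. -/
def sigmaEquiv (N : IMLN X Λ) (u₁ u₂ : N.V) : TT N u₁ u₂ ≃ TT N u₂ u₁ :=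
  Equiv.sumCongr (Equiv.refl N.V) (Equiv.sumComm _ _)

lemma ppi_sigma (u₁ u₂ : N.V) (x : TT N u₁ u₂) :
    ppi N u₂ u₁ (sigmaEquiv N u₁ u₂ x) = ppi N u₁ u₂ x := by
  rcases x with a | (a | a) <;> rfl

lemma RR_sigma (u₁ u₂ v₁ v₂ p₁ p₂ : N.V) (x y : TT N u₁ u₂) :
    RR N u₁ u₂ v₁ v₂ p₁ p₂ x y ↔
      RR N u₂ u₁ p₁ p₂ v₁ v₂ (sigmaEquiv N u₁ u₂ x) (sigmaEquiv N u₁ u₂ y) := by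
  rcases x with a | (a | a) <;> rcases y with b | (b | b) <;>
    simp only [sigmaEquiv, Equiv.sumCongr_apply, Equiv.coe_refl, Sum.map_inl,
      Sum.map_inr, id_eq, Equiv.sumComm_apply, Sum.swap_inl, Sum.swap_inr, RR] <;>
    tauto

end IMLN
namespace IMLN

variable {X Λ : Type} {N : IMLN X Λ}

/-- Two listings of the parents of a reticulation agree up to order. -/
lemma parents_pair (hN : N.IsIMLN) {u₂ p₁ p₂ p₁' p₂' : N.V} (h₂ : N.IsRet u₂)
    (hp : p₁ ≠ p₂) (hp₁ : N.Arc p₁ u₂) (hp₂ : N.Arc p₂ u₂)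
    (hp' : p₁' ≠ p₂') (hp₁' : N.Arc p₁' u₂) (hp₂' : N.Arc p₂' u₂) :
    (p₁' = p₁ ∧ p₂' = p₂) ∨ (p₁' = p₂ ∧ p₂' = p₁) := by
  haveI : Fintype N.V := N.fintypeV
  have h2 : ({x : N.V | N.Arc x u₂}).ncard = 2 := h₂.1
  obtain ⟨a, b, hab, hS⟩ := Set.ncard_eq_two.mp h2
  have mem : ∀ q : N.V, N.Arc q u₂ → q = a ∨ q = b := by
    intro q hq
    have : q ∈ ({a, b} : Set N.V) := hS ▸ hq
    simpa using this
  have key : ∀ q : N.V, N.Arc q u₂ → q = p₁ ∨ q = p₂ := by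
    intro q hq
    rcases mem p₁ hp₁ with h1 | h1
    · have h2' : p₂ = b := by
        rcases mem p₂ hp₂ with h | h
        · exact absurd (h1.trans h.symm) hp
        · exact h
      rcases mem q hq with h3 | h3
      · exact Or.inl (h3.trans h1.symm)
      · exact Or.inr (h3.trans h2'.symm)
    · have h2' : p₂ = a := by
        rcases mem p₂ hp₂ with h | h
        · exact h
        · exact absurd (h1.trans h.symm) hp
      rcases mem q hq with h3 | h3
      · exact Or.inr (h3.trans h2'.symm)
      · exact Or.inl (h3.trans h1.symm)
  rcases key p₁' hp₁' with h1 | h1 <;> rcases key p₂' hp₂' with h2' | h2'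
  · exact absurd (h1.trans h2'.symm) hp'
  · exact Or.inl ⟨h1, h2'⟩
  · exact Or.inr ⟨h1, h2'⟩
  · exact absurd (h1.trans h2'.symm) hp'

/-- Swapping to a different ordering of the parents of `u₂` is realised by an
automorphism of the canonical double unfolding. -/
lemma tau (hN : N.IsIMLN) {u₁ u₂ : N.V} (h₁ : N.IsMinRet u₁) (h₂ : N.IsMinRet u₂)
    (hne : u₁ ≠ u₂) {v₁ v₂ p₁ p₂ p₁' p₂' : N.V}
    (hv₁ : N.Arc v₁ u₁) (hv₂ : N.Arc v₂ u₁)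
    (hp : p₁ ≠ p₂) (hp₁ : N.Arc p₁ u₂) (hp₂ : N.Arc p₂ u₂)
    (hp' : p₁' ≠ p₂') (hp₁' : N.Arc p₁' u₂) (hp₂' : N.Arc p₂' u₂) :
    ∃ τ : TT N u₁ u₂ ≃ TT N u₁ u₂,
      (∀ x, ppi N u₁ u₂ (τ x) = ppi N u₁ u₂ x) ∧
      (∀ x y, RR N u₁ u₂ v₁ v₂ p₁ p₂ x y ↔
        RR N u₁ u₂ v₁ v₂ p₁' p₂' (τ x) (τ y)) := by
  classical
  rcases parents_pair hN h₂.1 hp hp₁ hp₂ hp' hp₁' hp₂' with ⟨e1, e2⟩ | ⟨e1, e2⟩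
  · subst e1; subst e2
    exact ⟨Equiv.refl _, fun x => rfl, fun x y => Iff.rfl⟩
  · rw [e1, e2]
    -- now the target pair is (p₂, p₁); build the swap of the two u₂-copies
    have hu1n : ¬ N.Reaches u₂ u₁ := not_reaches_of_min hN h₁ h₂ hne
    have hvn1 : ¬ N.Reaches u₂ v₁ := parent_not_in_other hN h₁ h₂ hne hv₁
    have hvn2 : ¬ N.Reaches u₂ v₂ := parent_not_in_other hN h₁ h₂ hne hv₂
    have hpn1 : ¬ N.Reaches u₂ p₁ := fun h => not_arc_back hN h hp₁
    have hpn2 : ¬ N.Reaches u₂ p₂ := fun h => not_arc_back hN h hp₂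
    have hdown : ∀ a b : N.V, N.Reaches u₂ a → N.Arc a b → N.Reaches u₂ b :=
      fun a b h h' => h.tail h'
    have hback : ∀ a : N.V, N.Reaches u₂ a → ¬ N.Arc a u₂ :=
      fun a h h' => not_arc_back hN h h'
    have hup : ∀ a b : N.V, ¬ N.Reaches u₂ a → N.Reaches u₂ b → N.Arc a b → b = u₂ := by
      intro a b ha hb hab
      by_contra hb2
      exact ha (parent_mem_subtree hN h₂ hb hb2 hab)
    have hmem : ∀ (a : {a : N.V // N.Reaches u₂ a}) (c : N.V), a.1 = c →
        N.Reaches u₂ c := fun a c h => h ▸ a.2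
    set f : TT N u₁ u₂ → TT N u₁ u₂ := fun x =>
      match x with
      | Sum.inl a => if h : N.Reaches u₂ a then Sum.inr (Sum.inr ⟨a, h⟩) else Sum.inl a
      | Sum.inr (Sum.inl a) => Sum.inr (Sum.inl a)
      | Sum.inr (Sum.inr a) => Sum.inl a.1 with hf
    have fpos : ∀ (a : N.V) (h : N.Reaches u₂ a),
        f (Sum.inl a) = Sum.inr (Sum.inr ⟨a, h⟩) := fun a h => dif_pos h
    have fneg : ∀ (a : N.V), ¬ N.Reaches u₂ a → f (Sum.inl a) = Sum.inl a :=
      fun a h => dif_neg h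
    have fr : ∀ (a : {a : N.V // N.Reaches u₂ a}), f (Sum.inr (Sum.inr a)) = Sum.inl a.1 :=
      fun a => rfl
    have finv : Function.Involutive f := by
      intro x
      rcases x with a | (a | a)
      · by_cases h : N.Reaches u₂ a
        · rw [fpos a h, fr]
        · rw [fneg a h, fneg a h]
      · rfl
      · rw [fr a, fpos a.1 a.2]
    refine ⟨finv.toPerm, ?_, ?_⟩
    · intro x
      rcases x with a | (a | a)
      · by_cases h : N.Reaches u₂ a
        · show ppi N u₁ u₂ (f (Sum.inl a)) = _; rw [fpos a h]; rfl
        · show ppi N u₁ u₂ (f (Sum.inl a)) = _; rw [fneg a h]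
      · rfl
      · rfl
    · intro x y
      show RR N u₁ u₂ v₁ v₂ p₁ p₂ x y ↔ RR N u₁ u₂ v₁ v₂ p₂ p₁ (f x) (f y)
      rcases x with a | (a | a) <;> rcases y with b | (b | b)
      · -- inl a, inl b
        by_cases ha : N.Reaches u₂ a <;> by_cases hb : N.Reaches u₂ b
        · rw [fpos a ha, fpos b hb]
          simp only [RR]
          constructor
          · rintro (⟨h, -, -⟩ | ⟨rfl, rfl⟩ | ⟨rfl, rfl⟩)
            · exact h
            · exact absurd ha hvn1
            · exact absurd ha hpn1
          · intro h
            refine Or.inl ⟨h, ?_, ?_⟩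
            · rintro rfl; exact hu1n hb
            · rintro rfl; exact hback a ha h
        · rw [fpos a ha, fneg b hb]
          simp only [RR]
          constructor
          · rintro (⟨h, -, -⟩ | ⟨rfl, rfl⟩ | ⟨rfl, rfl⟩)
            · exact hb (hdown a b ha h)
            · exact hvn1 ha
            · exact hpn1 ha
          · exact False.elim
        · rw [fneg a ha, fpos b hb]
          simp only [RR]
          constructor
          · rintro (⟨h, -, h2⟩ | ⟨rfl, rfl⟩ | ⟨rfl, rfl⟩)
            · exact absurd (hup a b ha hb h) h2
            · exact absurd hb hu1n
            · exact ⟨rfl, rfl⟩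
          · rintro ⟨rfl, h2⟩
            have h2' : b = u₂ := h2
            exact Or.inr (Or.inr ⟨rfl, h2'⟩)
        · rw [fneg a ha, fneg b hb]
          simp only [RR]
          constructor
          · rintro (⟨h, h1, h2⟩ | ⟨rfl, rfl⟩ | ⟨rfl, rfl⟩)
            · exact Or.inl ⟨h, h1, h2⟩
            · exact Or.inr (Or.inl ⟨rfl, rfl⟩)
            · exact absurd Relation.ReflTransGen.refl hb
          · rintro (⟨h, h1, h2⟩ | ⟨rfl, rfl⟩ | ⟨rfl, rfl⟩)
            · exact Or.inl ⟨h, h1, h2⟩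
            · exact Or.inr (Or.inl ⟨rfl, rfl⟩)
            · exact absurd Relation.ReflTransGen.refl hb
      · -- inl a, inr inl b
        by_cases ha : N.Reaches u₂ a
        · rw [fpos a ha]
          simp only [RR]
          constructor
          · rintro ⟨rfl, -⟩; exact hvn2 ha
          · exact False.elim
        · rw [fneg a ha]; exact Iff.rfl
      · -- inl a, inr inr b
        by_cases ha : N.Reaches u₂ a
        · rw [fpos a ha, fr b]
          simp only [RR]
          constructor
          · rintro ⟨rfl, -⟩; exact hpn2 ha
          · exact False.elim
        · rw [fneg a ha, fr b]
          simp only [RR]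
          constructor
          · rintro ⟨rfl, h2⟩; exact Or.inr (Or.inr ⟨rfl, h2⟩)
          · rintro (⟨h, -, h2⟩ | ⟨rfl, h2⟩ | ⟨rfl, h2⟩)
            · exact absurd (hup a b.1 ha b.2 h) h2
            · exact absurd (h2 ▸ b.2) hu1n
            · exact ⟨rfl, h2⟩
      · -- inr inl a, inl b
        by_cases hb : N.Reaches u₂ b
        · rw [fpos b hb]; exact Iff.rfl
        · rw [fneg b hb]; exact Iff.rfl
      · exact Iff.rfl
      · rw [fr b]; exact Iff.rfl
      · -- inr inr a, inl b
        rw [fr a]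
        by_cases hb : N.Reaches u₂ b
        · rw [fpos b hb]
          simp only [RR]
          constructor
          · exact False.elim
          · rintro ⟨h, -⟩; exact hpn1 (hmem a _ h)
        · rw [fneg b hb]
          simp only [RR]
          constructor
          · exact False.elim
          · rintro (⟨h, -, -⟩ | ⟨h, -⟩ | ⟨h, -⟩)
            · exact hb (hdown a.1 b a.2 h)
            · exact hvn1 (hmem a _ h)
            · exact hpn2 (hmem a _ h)
      · -- inr inr a, inr inl b
        rw [fr a]
        simp only [RR]
        constructor
        · exact False.elim
        · rintro ⟨h, -⟩; exact hvn2 (hmem a _ h)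
      · -- inr inr a, inr inr b
        rw [fr a, fr b]
        simp only [RR]
        constructor
        · intro h
          refine Or.inl ⟨h, ?_, ?_⟩
          · intro h'; exact hu1n (hmem b _ h')
          · intro h'; exact hback a.1 a.2 (by rw [h'] at h; exact h)
        · rintro (⟨h, -, -⟩ | ⟨h, -⟩ | ⟨h, -⟩)
          · exact h
          · exact absurd (hmem a _ h) hvn1
          · exact absurd (hmem a _ h) hpn2
end IMLN
namespace IMLN

variable {X Λ : Type} {N : IMLN X Λ}

/-- Every reticulation node of the unfolding `U(N,u₁)` is the image under the
main embedding of a reticulation node of `N` other than `u₁`. -/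
lemma unfold_ret (hN : N.IsIMLN) {u₁ : N.V} (h₁ : N.IsMinRet u₁) {A : IMLN X Λ}
    {g g' : N.V → A.V} {v₁ v₂ : N.V}
    (hginj : Function.Injective g)
    (hg'inj : ∀ a b : N.V, N.Reaches u₁ a → N.Reaches u₁ b → g' a = g' b → a = b)
    (hgg' : ∀ a b : N.V, N.Reaches u₁ b → g a ≠ g' b)
    (harcA : ∀ x y : A.V, A.Arc x y ↔
        ((∃ a b : N.V, N.Arc a b ∧ b ≠ u₁ ∧ x = g a ∧ y = g b) ∨
         (∃ a b : N.V, N.Reaches u₁ a ∧ N.Reaches u₁ b ∧ N.Arc a b ∧ x = g' a ∧ y = g' b) ∨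
         (x = g v₁ ∧ y = g u₁) ∨
         (x = g v₂ ∧ y = g' u₁)))
    (hcover : ∀ x : A.V, (∃ a, x = g a) ∨ (∃ a, N.Reaches u₁ a ∧ x = g' a)) :
    ∀ x : A.V, A.IsRet x → ∃ r : N.V, N.IsRet r ∧ r ≠ u₁ ∧ x = g r := by
  haveI : Fintype A.V := A.fintypeV
  haveI : Fintype N.V := N.fintypeV
  intro x hx
  rcases hcover x with ⟨a, rfl⟩ | ⟨a, ha, rfl⟩
  · by_cases hau : a = u₁
    · exfalso
      subst hau
      have hsub : {y : A.V | A.Arc y (g a)} ⊆ {g v₁} := by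
        intro y hy
        rw [Set.mem_setOf_eq, harcA] at hy
        rcases hy with ⟨a', b', harc, hbne, rfl, hb⟩ | ⟨a', b', ha', hb', harc, rfl, hb⟩ |
          ⟨h1, h2⟩ | ⟨h1, h2⟩
        · exact absurd (hginj hb).symm hbne
        · exact absurd hb (hgg' a b' hb')
        · exact h1 ▸ rfl
        · exact absurd h2 (hgg' a a Relation.ReflTransGen.refl)
      have hle : A.inDeg (g a) ≤ 1 := by
        have := Set.ncard_le_ncard hsub (Set.finite_singleton _)
        rw [Set.ncard_singleton] at this; exact this
      rw [hx.1] at hle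
      omega
    · have hset : {y : A.V | A.Arc y (g a)} = g '' {c : N.V | N.Arc c a} := by
        ext y
        simp only [Set.mem_setOf_eq, Set.mem_image]
        constructor
        · intro hy
          rw [harcA] at hy
          rcases hy with ⟨a', b', harc, hbne, rfl, hb⟩ | ⟨a', b', ha', hb', harc, rfl, hb⟩ |
            ⟨h1, h2⟩ | ⟨h1, h2⟩
          · exact ⟨a', (hginj hb) ▸ harc, rfl⟩
          · exact absurd hb (hgg' a b' hb')
          · exact absurd (hginj h2) hau
          · exact absurd h2 (hgg' a u₁ Relation.ReflTransGen.refl)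
        · rintro ⟨c, hc, rfl⟩
          rw [harcA]
          exact Or.inl ⟨c, a, hc, hau, rfl, rfl⟩
      have hdeg : N.inDeg a = 2 := by
        have h2 := hx.1
        unfold inDeg at h2 ⊢
        rw [hset, Set.ncard_image_of_injective _ hginj] at h2
        exact h2
      have haroot : a ≠ N.root := by
        intro h
        rw [h, hN.rootIn] at hdeg
        omega
      rcases hN.degrees a haroot with ⟨hd1, -⟩ | ⟨hd2, hd3⟩
      · rw [hdeg] at hd1; omega
      · exact ⟨a, ⟨hd2, hd3⟩, hau, rfl⟩
  · exfalso
    by_cases hau : a = u₁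
    · subst hau
      have hsub : {y : A.V | A.Arc y (g' a)} ⊆ {g v₂} := by
        intro y hy
        rw [Set.mem_setOf_eq, harcA] at hy
        rcases hy with ⟨a', b', harc, hbne, rfl, hb⟩ | ⟨a', b', ha', hb', harc, rfl, hb⟩ |
          ⟨h1, h2⟩ | ⟨h1, h2⟩
        · exact absurd hb.symm (hgg' b' a ha)
        · exact absurd (hg'inj _ _ hb' ha hb.symm ▸ harc) (fun h => not_arc_back hN ha' h)
        · exact absurd h2.symm (hgg' a a ha)
        · exact h1 ▸ rfl
      have hle : A.inDeg (g' a) ≤ 1 := by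
        have := Set.ncard_le_ncard hsub (Set.finite_singleton _)
        rw [Set.ncard_singleton] at this; exact this
      rw [hx.1] at hle
      omega
    · have hsub : {y : A.V | A.Arc y (g' a)} ⊆ g' '' {c : N.V | N.Arc c a} := by
        intro y hy
        rw [Set.mem_setOf_eq, harcA] at hy
        rcases hy with ⟨a', b', harc, hbne, rfl, hb⟩ | ⟨a', b', ha', hb', harc, rfl, hb⟩ |
          ⟨h1, h2⟩ | ⟨h1, h2⟩
        · exact absurd hb.symm (hgg' b' a ha)
        · exact ⟨a', hg'inj _ _ hb' ha hb.symm ▸ harc, rfl⟩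
        · exact absurd h2.symm (hgg' u₁ a ha)
        · exact absurd (hg'inj u₁ a Relation.ReflTransGen.refl ha h2.symm).symm hau
      have hle : A.inDeg (g' a) ≤ 1 := by
        have h1 := Set.ncard_le_ncard hsub (Set.toFinite _)
        have h2 := Set.ncard_image_le (s := {c : N.V | N.Arc c a}) (f := g') (Set.toFinite _)
        have h3 : N.inDeg a = 1 := indeg_one_in_subtree hN h₁ ha hau
        unfold inDeg at h3
        unfold inDeg
        omega
      rw [hx.1] at hle
      omega

end IMLN
namespace IMLN

variable {X Λ : Type} {N : IMLN X Λ}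

/-- Unfolding at `u₁` and then at (the copy of) `u₂` produces a network
isomorphic to the canonical double unfolding. -/
lemma side (hN : N.IsIMLN) {u₁ u₂ : N.V} (h₁ : N.IsMinRet u₁) (h₂ : N.IsMinRet u₂)
    (hne : u₁ ≠ u₂) {A B : IMLN X Λ}
    (hA : IsUnfoldAt N A u₁) (hB : UnfoldStep A B (N.retLabel u₂)) :
    ∃ v₁ v₂ p₁ p₂ : N.V,
      v₁ ≠ v₂ ∧ N.Arc v₁ u₁ ∧ N.Arc v₂ u₁ ∧ p₁ ≠ p₂ ∧ N.Arc p₁ u₂ ∧ N.Arc p₂ u₂ ∧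
      ∃ e : TT N u₁ u₂ ≃ B.V,
        (∀ x y, RR N u₁ u₂ v₁ v₂ p₁ p₂ x y ↔ B.Arc (e x) (e y)) ∧
        (∀ x, B.leafLabel (e x) = N.leafLabel (ppi N u₁ u₂ x)) ∧
        (∀ x, B.retLabel (e x) = N.retLabel (ppi N u₁ u₂ x)) := by
  classical
  obtain ⟨g, g', hginj, hg'inj, hgg', hcover, hgroot, hleafg, hretg, hleafg', hretg',
    v₁, v₂, hv12, hv1, hv2, harcA⟩ := hA
  obtain ⟨u, huMin, huLab, hBu⟩ := hB
  obtain ⟨r, hr, hru, rfl⟩ :=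
    unfold_ret hN h₁ hginj hg'inj hgg' harcA hcover u huMin.1
  obtain ⟨k, k', hkinj, hk'inj, hkk', hkcover, hkroot, hleafk, hretk, hleafk', hretk',
    w₁, w₂, hw12, hw1, hw2, harcB⟩ := hBu
  have hrlab : N.retLabel r = N.retLabel u₂ := by rw [← hretg r]; exact huLab
  obtain rfl : u₂ = r := (hN.retInj r u₂ hr h₂.1 hrlab).symm
  have hu1n2 : ¬ N.Reaches u₂ u₁ := not_reaches_of_min hN h₁ h₂ hne
  have hu2n1 : ¬ N.Reaches u₁ u₂ := not_reaches_of_min hN h₂ h₁ hne.symm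
  -- reachability transfer
  have RA1 : ∀ a : N.V, N.Reaches u₂ a → A.Reaches (g u₂) (g a) := by
    intro a ha
    induction ha with
    | refl => exact Relation.ReflTransGen.refl
    | @tail b c hb harc ih =>
        refine ih.tail ?_
        rw [harcA]
        refine Or.inl ⟨b, c, harc, ?_, rfl, rfl⟩
        intro hc
        exact hu1n2 (hc ▸ (hb.tail harc))
  have RA2 : ∀ x : A.V, A.Reaches (g u₂) x → ∃ a : N.V, N.Reaches u₂ a ∧ x = g a := by
    intro x hx
    induction hx with
    | refl => exact ⟨u₂, Relation.ReflTransGen.refl, rfl⟩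
    | @tail y z hy harc ih =>
        obtain ⟨a, ha, rfl⟩ := ih
        rw [harcA] at harc
        rcases harc with ⟨a', b', h1, h2, h3, h4⟩ | ⟨a', b', ha', hb'', h1, h3, h4⟩ |
          ⟨h1, h2⟩ | ⟨h1, h2⟩
        · obtain rfl : a = a' := hginj h3
          exact ⟨b', ha.tail h1, h4⟩
        · exact absurd h3 (hgg' a a' ha')
        · obtain rfl : a = v₁ := hginj h1
          exact absurd ha (parent_not_in_other hN h₁ h₂ hne hv1)
        · obtain rfl : a = v₂ := hginj h1
          exact absurd ha (parent_not_in_other hN h₁ h₂ hne hv2)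
  -- the parents of the copy of u₂
  have hwpar : ∀ w : A.V, A.Arc w (g u₂) → ∃ p : N.V, N.Arc p u₂ ∧ w = g p := by
    intro w hw
    rw [harcA] at hw
    rcases hw with ⟨a, b, h1, h2, h3, h4⟩ | ⟨a, b, ha', hb'', h1, h3, h4⟩ |
      ⟨h1, h2⟩ | ⟨h1, h2⟩
    · obtain rfl : u₂ = b := hginj h4
      exact ⟨a, h1, h3⟩
    · exact absurd h4 (hgg' u₂ b hb'')
    · exact absurd (hginj h2).symm hne
    · exact absurd h2 (hgg' u₂ u₁ Relation.ReflTransGen.refl)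
  obtain ⟨p₁, hp1, rfl⟩ := hwpar w₁ hw1
  obtain ⟨p₂, hp2, rfl⟩ := hwpar w₂ hw2
  have hp12 : p₁ ≠ p₂ := fun h => hw12 (by rw [h])
  refine ⟨v₁, v₂, p₁, p₂, hv12, hv1, hv2, hp12, hp1, hp2, ?_⟩
  -- the vertex bijection
  set J : TT N u₁ u₂ → B.V := fun x =>
    match x with
    | Sum.inl a => k (g a)
    | Sum.inr (Sum.inl a) => k (g' a.1)
    | Sum.inr (Sum.inr a) => k' (g a.1) with hJdef
  have hJinj : Function.Injective J := by
    intro x y hxy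
    rcases x with a | (a | a) <;> rcases y with b | (b | b)
    · rw [hginj (hkinj hxy)]
    · exact absurd (hkinj hxy) (hgg' a b.1 b.2)
    · exact absurd hxy (hkk' (g a) (g b.1) (RA1 b.1 b.2))
    · exact absurd (hkinj hxy).symm (hgg' b a.1 a.2)
    · exact congrArg (Sum.inr ∘ Sum.inl) (Subtype.ext (hg'inj a.1 b.1 a.2 b.2 (hkinj hxy)))
    · exact absurd hxy (hkk' (g' a.1) (g b.1) (RA1 b.1 b.2))
    · exact absurd hxy.symm (hkk' (g b) (g a.1) (RA1 a.1 a.2))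
    · exact absurd hxy.symm (hkk' (g' b.1) (g a.1) (RA1 a.1 a.2))
    · exact congrArg (Sum.inr ∘ Sum.inr)
        (Subtype.ext (hginj (hk'inj (g a.1) (g b.1) (RA1 a.1 a.2) (RA1 b.1 b.2) hxy)))
  have hJsurj : Function.Surjective J := by
    intro x
    rcases hkcover x with ⟨z, rfl⟩ | ⟨z, hz, rfl⟩
    · rcases hcover z with ⟨a, rfl⟩ | ⟨a, ha, rfl⟩
      · exact ⟨Sum.inl a, rfl⟩
      · exact ⟨Sum.inr (Sum.inl ⟨a, ha⟩), rfl⟩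
    · obtain ⟨a, ha, rfl⟩ := RA2 z hz
      exact ⟨Sum.inr (Sum.inr ⟨a, ha⟩), rfl⟩
  -- inversion of B-arcs
  have hBinv : ∀ Xx Yy : B.V, B.Arc Xx Yy →
      ∃ x y, Xx = J x ∧ Yy = J y ∧ RR N u₁ u₂ v₁ v₂ p₁ p₂ x y := by
    intro Xx Yy hb
    rw [harcB] at hb
    rcases hb with ⟨z, w, hzw, hwne, rfl, rfl⟩ | ⟨z, w, hz, hw, hzw, rfl, rfl⟩ |
      ⟨h1, h2⟩ | ⟨h1, h2⟩
    · rw [harcA] at hzw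
      rcases hzw with ⟨a, b, h1, h2, rfl, rfl⟩ | ⟨a, b, ha, hb', h1, rfl, rfl⟩ |
        ⟨rfl, rfl⟩ | ⟨rfl, rfl⟩
      · exact ⟨Sum.inl a, Sum.inl b, rfl, rfl,
          Or.inl ⟨h1, h2, fun h => hwne (by rw [h])⟩⟩
      · exact ⟨Sum.inr (Sum.inl ⟨a, ha⟩), Sum.inr (Sum.inl ⟨b, hb'⟩), rfl, rfl, h1⟩
      · exact ⟨Sum.inl v₁, Sum.inl u₁, rfl, rfl, Or.inr (Or.inl ⟨rfl, rfl⟩)⟩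
      · exact ⟨Sum.inl v₂, Sum.inr (Sum.inl ⟨u₁, Relation.ReflTransGen.refl⟩),
          rfl, rfl, ⟨rfl, rfl⟩⟩
    · obtain ⟨a, ha, rfl⟩ := RA2 z hz
      obtain ⟨b, hb', rfl⟩ := RA2 w hw
      rw [harcA] at hzw
      rcases hzw with ⟨a', b', h1, h2, h3, h4⟩ | ⟨a', b', ha', hb'', h1, h3, h4⟩ |
        ⟨h1, h2⟩ | ⟨h1, h2⟩
      · obtain rfl : a = a' := hginj h3
        obtain rfl : b = b' := hginj h4
        exact ⟨Sum.inr (Sum.inr ⟨a, ha⟩), Sum.inr (Sum.inr ⟨b, hb'⟩), rfl, rfl, h1⟩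
      · exact absurd h3 (hgg' a a' ha')
      · obtain rfl : b = u₁ := hginj h2
        exact absurd hb' hu1n2
      · exact absurd h2 (hgg' b u₁ Relation.ReflTransGen.refl)
    · exact ⟨Sum.inl p₁, Sum.inl u₂, h1, h2, Or.inr (Or.inr ⟨rfl, rfl⟩)⟩
    · exact ⟨Sum.inl p₂, Sum.inr (Sum.inr ⟨u₂, Relation.ReflTransGen.refl⟩),
        h1, h2, ⟨rfl, rfl⟩⟩
  refine ⟨Equiv.ofBijective J ⟨hJinj, hJsurj⟩, ?_, ?_, ?_⟩
  · intro x y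
    show RR N u₁ u₂ v₁ v₂ p₁ p₂ x y ↔ B.Arc (J x) (J y)
    constructor
    · intro hr
      rw [harcB]
      rcases x with a | (a | a) <;> rcases y with b | (b | b) <;>
        simp only [RR] at hr
      -- inl, inl
      · rcases hr with ⟨h, hb1, hb2⟩ | ⟨ha', hb'⟩ | ⟨ha', hb'⟩
        · refine Or.inl ⟨g a, g b, ?_, fun h' => hb2 (hginj h'), rfl, rfl⟩
          rw [harcA]; exact Or.inl ⟨a, b, h, hb1, rfl, rfl⟩
        · refine Or.inl ⟨g a, g b, ?_, ?_, rfl, rfl⟩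
          · rw [harcA]
            exact Or.inr (Or.inr (Or.inl ⟨by rw [ha'], by rw [hb']⟩))
          · intro h'
            apply hne
            rw [← hb']
            exact hginj h'
        · exact Or.inr (Or.inr (Or.inl ⟨by rw [ha'], by rw [hb']⟩))
      -- inl, inr inl
      · rcases hr with ⟨ha', hb⟩
        refine Or.inl ⟨g a, g' b.1, ?_, fun h' => (hgg' u₂ b.1 b.2) h'.symm, rfl, rfl⟩
        rw [harcA]
        exact Or.inr (Or.inr (Or.inr ⟨by rw [ha'], by rw [hb]⟩))
      -- inl, inr inr
      · rcases hr with ⟨ha', hb⟩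
        refine Or.inr (Or.inr (Or.inr ⟨by rw [ha'], ?_⟩))
        show k' (g b.1) = k' (g u₂)
        rw [hb]
      -- inr inl, inr inl
      · refine Or.inl ⟨g' a.1, g' b.1, ?_, fun h' => (hgg' u₂ b.1 b.2) h'.symm, rfl, rfl⟩
        rw [harcA]; exact Or.inr (Or.inl ⟨a.1, b.1, a.2, b.2, hr, rfl, rfl⟩)
      -- inr inr, inr inr
      · refine Or.inr (Or.inl ⟨g a.1, g b.1, RA1 a.1 a.2, RA1 b.1 b.2, ?_, rfl, rfl⟩)
        rw [harcA]
        refine Or.inl ⟨a.1, b.1, hr, ?_, rfl, rfl⟩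
        intro h
        exact hu1n2 (by rw [← h]; exact b.2)
    · intro hb
      obtain ⟨x', y', hx', hy', hrr⟩ := hBinv _ _ hb
      obtain rfl : x = x' := hJinj hx'
      obtain rfl : y = y' := hJinj hy'
      exact hrr
  · intro x
    rcases x with a | (a | a)
    · show B.leafLabel (k (g a)) = _
      rw [hleafk, hleafg]; rfl
    · show B.leafLabel (k (g' a.1)) = _
      rw [hleafk, hleafg' a.1 a.2]; rfl
    · show B.leafLabel (k' (g a.1)) = _
      rw [hleafk' _ (RA1 a.1 a.2), hleafg]; rfl
  · intro x
    rcases x with a | (a | a)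
    · show B.retLabel (k (g a)) = _
      rw [hretk, hretg]; rfl
    · show B.retLabel (k (g' a.1)) = _
      rw [hretk, hretg' a.1 a.2]; rfl
    · show B.retLabel (k' (g a.1)) = _
      rw [hretk' _ (RA1 a.1 a.2), hretg]; rfl

end IMLN
/-- **Lemma (unf-order).** Let `N` be an IMLN and `u₁, u₂ ∈ R_min(N)`.  Then
`U(U(N,u₁),u₂) = U(U(N,u₂),u₁)`: unfolding at `u₁` and then at (the node
corresponding to) `u₂` yields the same IMLN, up to isomorphism, as unfolding at
`u₂` and then at `u₁`. -/
theorem IMLN.unfold_comm (X Λ : Type) (N : IMLN X Λ) (hN : N.IsIMLN)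
    (u₁ u₂ : N.V) (h₁ : N.IsMinRet u₁) (h₂ : N.IsMinRet u₂)
    (A B A' B' : IMLN X Λ)
    (hA : IMLN.IsUnfoldAt N A u₁) (hB : IMLN.UnfoldStep A B (N.retLabel u₂))
    (hA' : IMLN.IsUnfoldAt N A' u₂) (hB' : IMLN.UnfoldStep A' B' (N.retLabel u₁)) :
    IMLN.Isom B B' := by
  by_cases hne : u₁ = u₂
  · -- degenerate case: the second unfolding step cannot exist
    exfalso
    subst hne
    obtain ⟨g, g', hginj, hg'inj, hgg', hcover, -, -, hretg, -, -,
      v₁, v₂, -, -, -, harcA⟩ := hA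
    obtain ⟨u, huMin, huLab, -⟩ := hB
    obtain ⟨r, hr, hru, rfl⟩ :=
      IMLN.unfold_ret hN h₁ hginj hg'inj hgg' harcA hcover u huMin.1
    exact hru (hN.retInj r u₁ hr h₁.1 (by rw [← hretg r]; exact huLab))
  · obtain ⟨v₁, v₂, p₁, p₂, hv12, hv1, hv2, hp12, hp1, hp2, e₁, he₁, hl₁, hr₁⟩ :=
      IMLN.side hN h₁ h₂ hne hA hB
    obtain ⟨v₁', v₂', q₁, q₂, hv12', hv1', hv2', hq12, hq1, hq2, e₂, he₂, hl₂, hr₂⟩ :=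
      IMLN.side hN h₂ h₁ (Ne.symm hne) hA' hB'
    obtain ⟨τa, hτaπ, hτa⟩ :=
      IMLN.tau hN h₁ h₂ hne hv1 hv2 hp12 hp1 hp2 hv12' hv1' hv2'
    obtain ⟨τb, hτbπ, hτb⟩ :=
      IMLN.tau hN h₂ h₁ (Ne.symm hne) hv1' hv2' hv12 hv1 hv2 hq12 hq1 hq2
    refine ⟨(e₁.symm.trans ((τa.trans ((IMLN.sigmaEquiv N u₁ u₂).trans τb)).trans e₂)),
      ?_, ?_, ?_⟩
    · intro x y
      show B.Arc x y ↔
        B'.Arc (e₂ (τb (IMLN.sigmaEquiv N u₁ u₂ (τa (e₁.symm x)))))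
          (e₂ (τb (IMLN.sigmaEquiv N u₁ u₂ (τa (e₁.symm y)))))
      rw [← he₂, ← hτb, ← IMLN.RR_sigma, ← hτa, he₁, Equiv.apply_symm_apply,
        Equiv.apply_symm_apply]
    · intro v _
      show B.leafLabel v = Equiv.refl X
        (B'.leafLabel (e₂ (τb (IMLN.sigmaEquiv N u₁ u₂ (τa (e₁.symm v))))))
      rw [Equiv.refl_apply, hl₂, hτbπ, IMLN.ppi_sigma, hτaπ, ← hl₁,
        Equiv.apply_symm_apply]
    · intro v _
      show B.retLabel v = Equiv.refl Λ
        (B'.retLabel (e₂ (τb (IMLN.sigmaEquiv N u₁ u₂ (τa (e₁.symm v))))))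
      rw [Equiv.refl_apply, hr₂, hτbπ, IMLN.ppi_sigma, hτaπ, ← hr₁,
        Equiv.apply_symm_apply]
end

section
/- Let N be an IMLN and let (u_1,…,u_k) and (v_1,…,v_k) be two equivalent compatible sequences of elements of R(N), with associated sequences of IMLNs (N, N_{u_1},…,N_{u_k}) and (N, N'_{v_1},…,N'_{v_k}). Then N_{u_k} and N'_{v_k} are isomorphic. -/
namespace IMLN

attribute [instance] IMLN.fintypeV

variable {X Λ : Type}

/-- Root-preserving, label-preserving isomorphism (stronger than `Isom`). -/
def RIsom (N₁ N₂ : IMLN X Λ) : Prop :=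
  ∃ f : N₁.V ≃ N₂.V,
    (∀ u v : N₁.V, N₁.Arc u v ↔ N₂.Arc (f u) (f v)) ∧
    f N₁.root = N₂.root ∧
    (∀ v : N₁.V, N₁.leafLabel v = N₂.leafLabel (f v)) ∧
    (∀ v : N₁.V, N₁.retLabel v = N₂.retLabel (f v))

theorem RIsom.refl (N : IMLN X Λ) : RIsom N N :=
  ⟨Equiv.refl _, fun _ _ => Iff.rfl, rfl, fun _ => rfl, fun _ => rfl⟩

theorem RIsom.symm {N₁ N₂ : IMLN X Λ} (h : RIsom N₁ N₂) : RIsom N₂ N₁ := by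
  obtain ⟨f, harc, hroot, hleaf, hret⟩ := h
  refine ⟨f.symm, fun u v => ?_, ?_, fun v => ?_, fun v => ?_⟩
  · rw [harc (f.symm u) (f.symm v), f.apply_symm_apply, f.apply_symm_apply]
  · rw [← hroot, f.symm_apply_apply]
  · rw [hleaf (f.symm v), f.apply_symm_apply]
  · rw [hret (f.symm v), f.apply_symm_apply]

theorem RIsom.trans {N₁ N₂ N₃ : IMLN X Λ} (h : RIsom N₁ N₂) (h' : RIsom N₂ N₃) :
    RIsom N₁ N₃ := by
  obtain ⟨f, harc, hroot, hleaf, hret⟩ := h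
  obtain ⟨g, harc', hroot', hleaf', hret'⟩ := h'
  exact ⟨f.trans g, fun u v => (harc u v).trans (harc' _ _),
    by simp [Equiv.trans_apply, hroot, hroot'],
    fun v => (hleaf v).trans (hleaf' _), fun v => (hret v).trans (hret' _)⟩

theorem RIsom.isom {N₁ N₂ : IMLN X Λ} (h : RIsom N₁ N₂) : Isom N₁ N₂ := by
  obtain ⟨f, harc, _, hleaf, hret⟩ := h
  exact ⟨f, harc, fun v _ => hleaf v, fun v _ => hret v⟩

section Transfer

variable {N₁ N₂ : IMLN X Λ} (f : N₁.V ≃ N₂.V)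
    (harc : ∀ u v : N₁.V, N₁.Arc u v ↔ N₂.Arc (f u) (f v))

include harc

theorem reaches_transfer {u v : N₁.V} (h : N₁.Reaches u v) :
    N₂.Reaches (f u) (f v) := by
  induction h with
  | refl => exact Relation.ReflTransGen.refl
  | tail _ hab ih => exact ih.tail ((harc _ _).1 hab)

theorem transGen_transfer {u v : N₁.V} (h : Relation.TransGen N₁.Arc u v) :
    Relation.TransGen N₂.Arc (f u) (f v) := by
  induction h with
  | single hab => exact Relation.TransGen.single ((harc _ _).1 hab)
  | tail _ hab ih => exact ih.tail ((harc _ _).1 hab)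

theorem reaches_transfer_iff (u v : N₁.V) :
    N₁.Reaches u v ↔ N₂.Reaches (f u) (f v) := by
  refine ⟨reaches_transfer f harc, fun h => ?_⟩
  have harc' : ∀ u v : N₂.V, N₂.Arc u v ↔ N₁.Arc (f.symm u) (f.symm v) := by
    intro u v
    rw [harc (f.symm u) (f.symm v), f.apply_symm_apply, f.apply_symm_apply]
  have := reaches_transfer f.symm harc' h
  simpa using this

theorem inDeg_transfer (v : N₁.V) : N₂.inDeg (f v) = N₁.inDeg v := by
  unfold inDeg
  have : {u : N₂.V | N₂.Arc u (f v)} = f '' {u : N₁.V | N₁.Arc u v} := by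
    ext x
    simp only [Set.mem_setOf_eq, Set.mem_image]
    constructor
    · intro hx
      exact ⟨f.symm x, by rwa [harc, f.apply_symm_apply], f.apply_symm_apply x⟩
    · rintro ⟨a, ha, rfl⟩
      exact (harc a v).1 ha
  rw [this, Set.ncard_image_of_injective _ f.injective]

theorem outDeg_transfer (v : N₁.V) : N₂.outDeg (f v) = N₁.outDeg v := by
  unfold outDeg
  have : {u : N₂.V | N₂.Arc (f v) u} = f '' {u : N₁.V | N₁.Arc v u} := by
    ext x
    simp only [Set.mem_setOf_eq, Set.mem_image]
    constructor
    · intro hx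
      exact ⟨f.symm x, by rwa [harc, f.apply_symm_apply], f.apply_symm_apply x⟩
    · rintro ⟨a, ha, rfl⟩
      exact (harc v a).1 ha
  rw [this, Set.ncard_image_of_injective _ f.injective]

theorem isRet_transfer (v : N₁.V) : N₁.IsRet v ↔ N₂.IsRet (f v) := by
  unfold IsRet; rw [inDeg_transfer f harc, outDeg_transfer f harc]

theorem isElem_transfer (v : N₁.V) : N₁.IsElem v ↔ N₂.IsElem (f v) := by
  unfold IsElem; rw [inDeg_transfer f harc, outDeg_transfer f harc]

theorem isLeaf_transfer (v : N₁.V) : N₁.IsLeaf v ↔ N₂.IsLeaf (f v) := by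
  unfold IsLeaf; rw [outDeg_transfer f harc]

theorem isMinRet_transfer (v : N₁.V) : N₁.IsMinRet v ↔ N₂.IsMinRet (f v) := by
  unfold IsMinRet
  rw [← isRet_transfer f harc]
  refine and_congr Iff.rfl ⟨fun h w hw hr => ?_, fun h w hw hr => ?_⟩
  · have := h (f.symm w) (by rwa [isRet_transfer f harc, f.apply_symm_apply])
      (by rw [reaches_transfer_iff f harc, f.apply_symm_apply]; exact hr)
    rw [← this, f.apply_symm_apply]
  · have := h (f w) ((isRet_transfer f harc w).1 hw)
      ((reaches_transfer_iff f harc _ _).1 hr)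
    exact f.injective this

end Transfer

theorem RIsom.isIMLN {N₁ N₂ : IMLN X Λ} (h : RIsom N₁ N₂) (h₁ : N₁.IsIMLN) :
    N₂.IsIMLN := by
  obtain ⟨f, harc, hroot, hleaf, hret⟩ := h
  have harc' : ∀ u v : N₂.V, N₂.Arc u v ↔ N₁.Arc (f.symm u) (f.symm v) := by
    intro u v
    rw [harc (f.symm u) (f.symm v), f.apply_symm_apply, f.apply_symm_apply]
  constructor
  · intro v hv
    exact h₁.acyclic (f.symm v) (transGen_transfer f.symm harc' hv)
  · rw [← hroot, inDeg_transfer f harc]; exact h₁.rootIn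
  · rw [← hroot, outDeg_transfer f harc]; exact h₁.rootOut
  · intro v hv
    rw [← hroot]
    have : N₁.inDeg (f.symm v) = 0 := by
      rw [← inDeg_transfer f harc, f.apply_symm_apply]; exact hv
    rw [← h₁.uniqueRoot _ this, f.apply_symm_apply]
  · intro v
    have := reaches_transfer f harc (h₁.connected (f.symm v))
    rwa [hroot, f.apply_symm_apply] at this
  · intro v hv
    have hv' : f.symm v ≠ N₁.root := by
      intro hc; apply hv; rw [← hroot, ← hc, f.apply_symm_apply]
    have := h₁.degrees (f.symm v) hv'
    rwa [← inDeg_transfer f harc, ← outDeg_transfer f harc, f.apply_symm_apply] at this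
  · intro x
    obtain ⟨v, hv, hl⟩ := h₁.leafSurj x
    exact ⟨f v, (isLeaf_transfer f harc v).1 hv, by rw [← hleaf]; exact hl⟩
  · intro u v hu hv hl
    have := h₁.retInj (f.symm u) (f.symm v)
      (by rwa [isRet_transfer f harc, f.apply_symm_apply])
      (by rwa [isRet_transfer f harc, f.apply_symm_apply])
      (by rw [hret (f.symm u), hret (f.symm v), f.apply_symm_apply, f.apply_symm_apply]
          exact hl)
    calc u = f (f.symm u) := (f.apply_symm_apply u).symm
    _ = f (f.symm v) := by rw [this]
    _ = v := f.apply_symm_apply v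
  · intro u v hu hv hl
    refine h₁.retElemLabels (f.symm u) (f.symm v)
      (by rwa [isRet_transfer f harc, f.apply_symm_apply])
      (by rwa [isElem_transfer f harc, f.apply_symm_apply]) ?_
    rw [hret (f.symm u), hret (f.symm v), f.apply_symm_apply, f.apply_symm_apply]
    exact hl

end IMLN
namespace IMLN

variable {X Λ : Type}

theorem harc_symm {N₁ N₂ : IMLN X Λ} (f : N₁.V ≃ N₂.V)
    (harc : ∀ u v : N₁.V, N₁.Arc u v ↔ N₂.Arc (f u) (f v)) :
    ∀ u v : N₂.V, N₂.Arc u v ↔ N₁.Arc (f.symm u) (f.symm v) := by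
  intro u v
  rw [harc (f.symm u) (f.symm v), f.apply_symm_apply, f.apply_symm_apply]

/-- Transport an unfolding step along a root-preserving isomorphism of the source. -/
theorem UnfoldStep.transport {N₁ N₂ M : IMLN X Λ} (h : RIsom N₁ N₂) {l : Λ}
    (hs : UnfoldStep N₁ M l) : UnfoldStep N₂ M l := by
  obtain ⟨f, harc, hroot, hleaf, hret⟩ := h
  obtain ⟨u, humin, hul, g, g', hg, hg', hdisj, hcover, hgroot, hgleaf, hgret,
    hg'leaf, hg'ret, v₁, v₂, hv12, hv1, hv2, hiff⟩ := hs
  have harc' := harc_symm f harc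
  refine ⟨f u, (isMinRet_transfer f harc u).1 humin, by rw [← hret]; exact hul,
    g ∘ f.symm, g' ∘ f.symm, hg.comp f.symm.injective, ?_, ?_, ?_, ?_, ?_, ?_, ?_, ?_,
    f v₁, f v₂, fun hc => hv12 (f.injective hc), (harc _ _).1 hv1, (harc _ _).1 hv2, ?_⟩
  · intro a b ha hb hab
    have ha' : N₁.Reaches u (f.symm a) := by
      rw [reaches_transfer_iff f harc, f.apply_symm_apply]; exact ha
    have hb' : N₁.Reaches u (f.symm b) := by
      rw [reaches_transfer_iff f harc, f.apply_symm_apply]; exact hb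
    have := hg' _ _ ha' hb' hab
    calc a = f (f.symm a) := (f.apply_symm_apply a).symm
    _ = f (f.symm b) := by rw [this]
    _ = b := f.apply_symm_apply b
  · intro a b hb
    exact hdisj _ _ (by rw [reaches_transfer_iff f harc, f.apply_symm_apply]; exact hb)
  · intro x
    rcases hcover x with ⟨a, rfl⟩ | ⟨a, ha, rfl⟩
    · exact Or.inl ⟨f a, by simp⟩
    · refine Or.inr ⟨f a, ?_, by simp⟩
      rw [reaches_transfer_iff f harc] at ha
      simpa using ha
  · simp only [Function.comp_apply, ← hroot, f.symm_apply_apply]; exact hgroot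
  · intro a
    simp only [Function.comp_apply, hgleaf]
    rw [hleaf (f.symm a), f.apply_symm_apply]
  · intro a
    simp only [Function.comp_apply, hgret]
    rw [hret (f.symm a), f.apply_symm_apply]
  · intro a ha
    have ha' : N₁.Reaches u (f.symm a) := by
      rw [reaches_transfer_iff f harc, f.apply_symm_apply]; exact ha
    simp only [Function.comp_apply, hg'leaf _ ha']
    rw [hleaf (f.symm a), f.apply_symm_apply]
  · intro a ha
    have ha' : N₁.Reaches u (f.symm a) := by
      rw [reaches_transfer_iff f harc, f.apply_symm_apply]; exact ha
    simp only [Function.comp_apply, hg'ret _ ha']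
    rw [hret (f.symm a), f.apply_symm_apply]
  · intro x y
    rw [hiff x y]
    constructor
    · rintro (⟨a, b, hab, hbu, rfl, rfl⟩ | ⟨a, b, ha, hb, hab, rfl, rfl⟩ |
        ⟨rfl, rfl⟩ | ⟨rfl, rfl⟩)
      · exact Or.inl ⟨f a, f b, (harc a b).1 hab, fun hc => hbu (by simpa using hc),
          by simp, by simp⟩
      · refine Or.inr (Or.inl ⟨f a, f b, ?_, ?_, (harc a b).1 hab, by simp, by simp⟩) <;>
          · rw [reaches_transfer_iff f harc] at *
            first | simpa using ha | simpa using hb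
      · exact Or.inr (Or.inr (Or.inl ⟨by simp, by simp⟩))
      · exact Or.inr (Or.inr (Or.inr ⟨by simp, by simp⟩))
    · rintro (⟨a, b, hab, hbu, rfl, rfl⟩ | ⟨a, b, ha, hb, hab, rfl, rfl⟩ |
        ⟨h1, h2⟩ | ⟨h1, h2⟩)
      · refine Or.inl ⟨f.symm a, f.symm b, (harc' _ _).1 hab, ?_, rfl, rfl⟩
        intro hc; exact hbu (by rw [← hc, f.apply_symm_apply])
      · refine Or.inr (Or.inl ⟨f.symm a, f.symm b, ?_, ?_,
          (harc' _ _).1 hab, rfl, rfl⟩) <;>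
          · rw [reaches_transfer_iff f harc, f.apply_symm_apply]; assumption
      · simp only [Function.comp_apply, f.symm_apply_apply] at h1 h2
        exact Or.inr (Or.inr (Or.inl ⟨h1, h2⟩))
      · simp only [Function.comp_apply, f.symm_apply_apply] at h1 h2
        exact Or.inr (Or.inr (Or.inr ⟨h1, h2⟩))

/-- Transport an unfolding sequence along a root-preserving isomorphism. -/
theorem IsUnfoldSeq.transport {N₁ N₂ M : IMLN X Λ} (h : RIsom N₁ N₂) {ls : List Λ}
    (hs : IsUnfoldSeq N₁ ls M) : ∃ M', IsUnfoldSeq N₂ ls M' ∧ RIsom M M' := by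
  induction hs generalizing N₂ with
  | nil N => exact ⟨N₂, IsUnfoldSeq.nil N₂, h⟩
  | cons hstep _ ih =>
    obtain ⟨M', hseq, hiso⟩ := ih (RIsom.refl _)
    exact ⟨M', IsUnfoldSeq.cons (hstep.transport h) hseq, hiso⟩

end IMLN
namespace IMLN

variable {X Λ : Type} {N : IMLN X Λ}

theorem not_arc_of_reaches (hN : N.IsIMLN) {u a : N.V} (h : N.Reaches u a) :
    ¬ N.Arc a u := fun hc => hN.acyclic u (Relation.TransGen.tail' h hc)

theorem no_arc_to_root (hN : N.IsIMLN) (a : N.V) : ¬ N.Arc a N.root := by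
  intro hc
  have h0 : {x : N.V | N.Arc x N.root} = ∅ :=
    (Set.ncard_eq_zero (Set.toFinite _)).1 hN.rootIn
  exact absurd (show a ∈ {x : N.V | N.Arc x N.root} from hc) (h0 ▸ Set.notMem_empty a)

theorem eq_root_of_reaches_root (hN : N.IsIMLN) {u : N.V}
    (h : N.Reaches u N.root) : u = N.root := by
  rcases Relation.ReflTransGen.cases_tail h with h' | ⟨c, _, hc⟩
  · exact h'.symm
  · exact absurd hc (no_arc_to_root hN c)

theorem inDeg_pos_of_arc {a b : N.V} (h : N.Arc a b) : N.inDeg b ≠ 0 := by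
  intro hc
  have h0 : {x : N.V | N.Arc x b} = ∅ := (Set.ncard_eq_zero (Set.toFinite _)).1 hc
  exact absurd (show a ∈ {x : N.V | N.Arc x b} from h) (h0 ▸ Set.notMem_empty a)

theorem ret_ne_root (hN : N.IsIMLN) {u : N.V} (h : N.IsRet u) : u ≠ N.root := by
  intro hc
  rw [hc] at h
  have h1 := h.1
  rw [hN.rootIn] at h1
  exact absurd h1 (by norm_num)

theorem parents_of_ret (hN : N.IsIMLN) {u : N.V} (h : N.IsRet u) :
    ∃ p q : N.V, p ≠ q ∧ N.Arc p u ∧ N.Arc q u ∧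
      ∀ x : N.V, N.Arc x u → x = p ∨ x = q := by
  obtain ⟨p, q, hpq, hs⟩ := Set.ncard_eq_two.1 h.1
  have hp : N.Arc p u := by
    have : p ∈ {x : N.V | N.Arc x u} := hs ▸ Set.mem_insert _ _
    exact this
  have hq : N.Arc q u := by
    have : q ∈ {x : N.V | N.Arc x u} := hs ▸ (Set.mem_insert_iff.2 (Or.inr rfl))
    exact this
  refine ⟨p, q, hpq, hp, hq, fun x hx => ?_⟩
  have : x ∈ ({p, q} : Set N.V) := hs ▸ hx
  simpa using this

/-- Below a minimal reticulation node everything has in-degree one. -/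
theorem inDeg_below_minRet (hN : N.IsIMLN) {u b : N.V} (hu : N.IsMinRet u)
    (hb : N.Reaches u b) (hbu : b ≠ u) : N.inDeg b = 1 := by
  have hnb : ∃ p, N.Reaches u p ∧ N.Arc p b := by
    rcases Relation.ReflTransGen.cases_tail hb with h' | ⟨c, hc1, hc2⟩
    · exact absurd h' hbu
    · exact ⟨c, hc1, hc2⟩
  obtain ⟨p, _, hp⟩ := hnb
  have hbroot : b ≠ N.root := by
    intro hc; rw [hc] at hp; exact no_arc_to_root hN p hp
  rcases hN.degrees b hbroot with ⟨h1, _⟩ | ⟨h2in, h2out⟩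
  · exact h1
  · exact absurd (hu.2 b ⟨h2in, h2out⟩ hb) hbu

/-- No "cross arcs" into the part below a minimal reticulation node. -/
theorem reaches_of_arc_below (hN : N.IsIMLN) {u a b : N.V} (hu : N.IsMinRet u)
    (hb : N.Reaches u b) (hbu : b ≠ u) (hab : N.Arc a b) : N.Reaches u a := by
  obtain ⟨c, hcs⟩ := (Set.ncard_eq_one).1 (inDeg_below_minRet hN hu hb hbu)
  have hnb : ∃ p, N.Reaches u p ∧ N.Arc p b := by
    rcases Relation.ReflTransGen.cases_tail hb with h' | ⟨c', hc1, hc2⟩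
    · exact absurd h' hbu
    · exact ⟨c', hc1, hc2⟩
  obtain ⟨p, hpu, hp⟩ := hnb
  have hpc : p = c := by have : p ∈ ({c} : Set N.V) := hcs ▸ hp; simpa using this
  have hac : a = c := by have : a ∈ ({c} : Set N.V) := hcs ▸ hab; simpa using this
  rw [hac, ← hpc]; exact hpu

theorem reaches_trans_arc {a b c : N.V} (h : N.Reaches a b) (h' : N.Arc b c) :
    N.Reaches a c := h.tail h'

theorem not_reaches_parent (hN : N.IsIMLN) {u p : N.V} (hp : N.Arc p u) :
    ¬ N.Reaches u p := fun hc => not_arc_of_reaches hN hc hp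

theorem minRet_not_reaches_ret (hN : N.IsIMLN) {u w : N.V} (hu : N.IsMinRet u)
    (hw : N.IsRet w) (hne : w ≠ u) : ¬ N.Reaches u w := fun hc => hne (hu.2 w hw hc)

end IMLN
namespace IMLN

variable {X Λ : Type}

/-- Arc relation of the explicit unfolding. -/
def expArc (N : IMLN X Λ) (u v₁ v₂ : N.V) :
    (N.V ⊕ {v : N.V // N.Reaches u v}) → (N.V ⊕ {v : N.V // N.Reaches u v}) → Prop
  | Sum.inl a, Sum.inl b => (N.Arc a b ∧ b ≠ u) ∨ (a = v₁ ∧ b = u)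
  | Sum.inl a, Sum.inr b => a = v₂ ∧ b.1 = u
  | Sum.inr _, Sum.inl _ => False
  | Sum.inr a, Sum.inr b => N.Arc a.1 b.1

/-- Explicit construction of the unfolding of `N` at `u` with parents `v₁, v₂`. -/
@[reducible] noncomputable def expUnfold (N : IMLN X Λ) (u v₁ v₂ : N.V) : IMLN X Λ where
  V := N.V ⊕ {v : N.V // N.Reaches u v}
  fintypeV := @instFintypeSum _ _ N.fintypeV (@Subtype.fintype _ _ (Classical.decPred _) N.fintypeV)
  Arc := expArc N u v₁ v₂
  root := Sum.inl N.root
  leafLabel := Sum.elim N.leafLabel (fun b => N.leafLabel b.1)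
  retLabel := Sum.elim N.retLabel (fun b => N.retLabel b.1)

@[simp] theorem expUnfold_arc_inl_inl {N : IMLN X Λ} {u v₁ v₂ a b : N.V} :
    expArc N u v₁ v₂ (Sum.inl a) (Sum.inl b) ↔
      (N.Arc a b ∧ b ≠ u) ∨ (a = v₁ ∧ b = u) := Iff.rfl

@[simp] theorem expUnfold_arc_inl_inr {N : IMLN X Λ} {u v₁ v₂ a : N.V}
    {b : {v : N.V // N.Reaches u v}} :
    expArc N u v₁ v₂ (Sum.inl a) (Sum.inr b) ↔ (a = v₂ ∧ b.1 = u) := Iff.rfl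

@[simp] theorem expUnfold_arc_inr_inl {N : IMLN X Λ} {u v₁ v₂ b : N.V}
    {a : {v : N.V // N.Reaches u v}} :
    ¬ expArc N u v₁ v₂ (Sum.inr a) (Sum.inl b) := fun h => h

@[simp] theorem expUnfold_arc_inr_inr {N : IMLN X Λ} {u v₁ v₂ : N.V}
    {a b : {v : N.V // N.Reaches u v}} :
    expArc N u v₁ v₂ (Sum.inr a) (Sum.inr b) ↔ N.Arc a.1 b.1 := Iff.rfl

@[simp] theorem expUnfold_root {N : IMLN X Λ} {u v₁ v₂ : N.V} :
    (expUnfold N u v₁ v₂).root = Sum.inl N.root := rfl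

@[simp] theorem expUnfold_leafLabel_inl {N : IMLN X Λ} {u v₁ v₂ a : N.V} :
    (expUnfold N u v₁ v₂).leafLabel (Sum.inl a) = N.leafLabel a := rfl

@[simp] theorem expUnfold_leafLabel_inr {N : IMLN X Λ} {u v₁ v₂ : N.V}
    {a : {v : N.V // N.Reaches u v}} :
    (expUnfold N u v₁ v₂).leafLabel (Sum.inr a) = N.leafLabel a.1 := rfl

@[simp] theorem expUnfold_retLabel_inl {N : IMLN X Λ} {u v₁ v₂ a : N.V} :
    (expUnfold N u v₁ v₂).retLabel (Sum.inl a) = N.retLabel a := rfl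

@[simp] theorem expUnfold_retLabel_inr {N : IMLN X Λ} {u v₁ v₂ : N.V}
    {a : {v : N.V // N.Reaches u v}} :
    (expUnfold N u v₁ v₂).retLabel (Sum.inr a) = N.retLabel a.1 := rfl

/-- The explicit unfolding is an unfolding. -/
theorem isUnfoldAt_expUnfold (N : IMLN X Λ) {u v₁ v₂ : N.V} (hv12 : v₁ ≠ v₂)
    (h1 : N.Arc v₁ u) (h2 : N.Arc v₂ u) :
    IsUnfoldAt N (expUnfold N u v₁ v₂) u := by
  classical
  refine ⟨Sum.inl, fun a => if h : N.Reaches u a then Sum.inr ⟨a, h⟩ else Sum.inl a,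
    Sum.inl_injective, ?_, ?_, ?_, rfl, fun a => rfl, fun a => rfl, ?_, ?_,
    v₁, v₂, hv12, h1, h2, ?_⟩
  · intro a b ha hb hab
    simp only [dif_pos ha, dif_pos hb] at hab
    exact congrArg Subtype.val (Sum.inr_injective hab)
  · intro a b hb
    simp only [dif_pos hb]
    simp
  · intro x
    rcases x with a | ⟨a, ha⟩
    · exact Or.inl ⟨a, rfl⟩
    · exact Or.inr ⟨a, ha, by simp only [dif_pos ha]⟩
  · intro a ha
    simp only [dif_pos ha]
    rfl
  · intro a ha
    simp only [dif_pos ha]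
    rfl
  · intro x y
    rcases x with a | a <;> rcases y with b | b
    · simp only [expUnfold_arc_inl_inl]
      constructor
      · rintro (⟨hab, hbu⟩ | ⟨rfl, rfl⟩)
        · exact Or.inl ⟨a, b, hab, hbu, rfl, rfl⟩
        · exact Or.inr (Or.inr (Or.inl ⟨rfl, rfl⟩))
      · rintro (⟨a', b', hab, hbu, ha, hb⟩ | ⟨a', b', ha', hb', hab, ha, hb⟩ |
          ⟨ha, hb⟩ | ⟨ha, hb⟩)
        · rw [Sum.inl.injEq] at ha hb; subst ha; subst hb; exact Or.inl ⟨hab, hbu⟩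
        · simp only [dif_pos ha'] at ha; exact absurd ha (by simp)
        · rw [Sum.inl.injEq] at ha hb; exact Or.inr ⟨ha, hb⟩
        · simp only [dif_pos (show N.Reaches u u from Relation.ReflTransGen.refl)] at hb; exact absurd hb (by simp)
    · simp only [expUnfold_arc_inl_inr]
      constructor
      · rintro ⟨rfl, hb⟩
        refine Or.inr (Or.inr (Or.inr ⟨rfl, ?_⟩))
        simp only [dif_pos (show N.Reaches u u from Relation.ReflTransGen.refl)]
        exact congrArg Sum.inr (Subtype.ext hb)
      · rintro (⟨a', b', hab, hbu, ha, hb⟩ | ⟨a', b', ha', hb', hab, ha, hb⟩ |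
          ⟨ha, hb⟩ | ⟨ha, hb⟩)
        · exact absurd hb (by simp)
        · simp only [dif_pos ha'] at ha; exact absurd ha (by simp)
        · exact absurd hb (by simp)
        · rw [Sum.inl.injEq] at ha
          simp only [dif_pos (show N.Reaches u u from Relation.ReflTransGen.refl), Sum.inr.injEq] at hb
          exact ⟨ha, by rw [hb]⟩
    · constructor
      · intro h; exact False.elim h
      · rintro (⟨a', b', hab, hbu, ha, hb⟩ | ⟨a', b', ha', hb', hab, ha, hb⟩ |
          ⟨ha, hb⟩ | ⟨ha, hb⟩)
        · exact absurd ha (by simp)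
        · simp only [dif_pos hb'] at hb; exact absurd hb (by simp)
        · exact absurd ha (by simp)
        · exact absurd ha (by simp)
    · simp only [expUnfold_arc_inr_inr]
      constructor
      · intro h
        exact Or.inr (Or.inl ⟨a.1, b.1, a.2, b.2, h, by simp only [dif_pos a.2],
          by simp only [dif_pos b.2]⟩)
      · rintro (⟨a', b', hab, hbu, ha, hb⟩ | ⟨a', b', ha', hb', hab, ha, hb⟩ |
          ⟨ha, hb⟩ | ⟨ha, hb⟩)
        · exact absurd ha (by simp)
        · simp only [dif_pos ha'] at ha
          simp only [dif_pos hb'] at hb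
          rw [Sum.inr.injEq] at ha hb
          have ha2 := congrArg Subtype.val ha
          have hb2 := congrArg Subtype.val hb
          simp only at ha2 hb2
          rw [ha2, hb2]; exact hab
        · exact absurd ha (by simp)
        · simp only [dif_pos (show N.Reaches u u from Relation.ReflTransGen.refl)] at hb
          rw [Sum.inr.injEq] at hb
          have hb2 := congrArg Subtype.val hb
          simp only at hb2
          exact absurd ha (by simp)

/-- Every unfolding at `u` is isomorphic to an explicit one. -/
theorem IsUnfoldAt.risom_exp {N M : IMLN X Λ} {u : N.V} (h : IsUnfoldAt N M u) :
    ∃ v₁ v₂ : N.V, v₁ ≠ v₂ ∧ N.Arc v₁ u ∧ N.Arc v₂ u ∧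
      (∀ x : N.V, N.Arc x u → True) ∧ RIsom (expUnfold N u v₁ v₂) M := by
  obtain ⟨g, g', hg, hg', hdisj, hcover, hgroot, hgleaf, hgret,
    hg'leaf, hg'ret, v₁, v₂, hv12, hv1, hv2, hiff⟩ := h
  refine ⟨v₁, v₂, hv12, hv1, hv2, fun _ _ => trivial, ?_⟩
  set h : (expUnfold N u v₁ v₂).V → M.V := Sum.elim g (fun b => g' b.1) with hh
  have hbij : Function.Bijective h := by
    constructor
    · intro x y hxy
      rcases x with a | a <;> rcases y with b | b
      · exact congrArg Sum.inl (hg hxy)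
      · exact absurd hxy (hdisj a b.1 b.2)
      · exact absurd hxy.symm (hdisj b a.1 a.2)
      · exact congrArg Sum.inr (Subtype.ext (hg' a.1 b.1 a.2 b.2 hxy))
    · intro x
      rcases hcover x with ⟨a, rfl⟩ | ⟨a, ha, rfl⟩
      · exact ⟨Sum.inl a, rfl⟩
      · exact ⟨Sum.inr ⟨a, ha⟩, rfl⟩
  refine ⟨Equiv.ofBijective h hbij, ?_, ?_, ?_, ?_⟩
  · intro x y
    show (expUnfold N u v₁ v₂).Arc x y ↔ M.Arc (h x) (h y)
    rw [hiff (h x) (h y)]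
    rcases x with a | a <;> rcases y with b | b
    · simp only [hh, Sum.elim_inl, expUnfold_arc_inl_inl]
      constructor
      · rintro (⟨hab, hbu⟩ | ⟨rfl, rfl⟩)
        · exact Or.inl ⟨a, b, hab, hbu, rfl, rfl⟩
        · exact Or.inr (Or.inr (Or.inl ⟨rfl, rfl⟩))
      · rintro (⟨a', b', hab, hbu, ha, hb⟩ | ⟨a', b', ha', hb', hab, ha, hb⟩ |
          ⟨ha, hb⟩ | ⟨ha, hb⟩)
        · rw [hg ha, hg hb]; exact Or.inl ⟨hab, hbu⟩
        · exact absurd ha (hdisj a a' ha')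
        · rw [hg ha, hg hb]; exact Or.inr ⟨rfl, rfl⟩
        · exact absurd hb (hdisj b u Relation.ReflTransGen.refl)
    · simp only [hh, Sum.elim_inl, Sum.elim_inr, expUnfold_arc_inl_inr]
      constructor
      · rintro ⟨rfl, hb⟩
        exact Or.inr (Or.inr (Or.inr ⟨rfl, by rw [hb]⟩))
      · rintro (⟨a', b', hab, hbu, ha, hb⟩ | ⟨a', b', ha', hb', hab, ha, hb⟩ |
          ⟨ha, hb⟩ | ⟨ha, hb⟩)
        · exact absurd hb.symm (hdisj b' b.1 b.2)
        · exact absurd ha (hdisj a a' ha')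
        · exact absurd hb.symm (hdisj u b.1 b.2)
        · exact ⟨hg ha, hg' b.1 u b.2 Relation.ReflTransGen.refl hb⟩
    · simp only [hh, Sum.elim_inl, Sum.elim_inr]
      constructor
      · intro hc; exact absurd hc (expUnfold_arc_inr_inl)
      · rintro (⟨a', b', hab, hbu, ha, hb⟩ | ⟨a', b', ha', hb', hab, ha, hb⟩ |
          ⟨ha, hb⟩ | ⟨ha, hb⟩)
        · exact absurd ha.symm (hdisj a' a.1 a.2)
        · exact absurd hb (hdisj b b' hb')
        · exact absurd ha.symm (hdisj v₁ a.1 a.2)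
        · exact absurd ha.symm (hdisj v₂ a.1 a.2)
    · simp only [hh, Sum.elim_inr, expUnfold_arc_inr_inr]
      constructor
      · intro hab
        exact Or.inr (Or.inl ⟨a.1, b.1, a.2, b.2, hab, rfl, rfl⟩)
      · rintro (⟨a', b', hab, hbu, ha, hb⟩ | ⟨a', b', ha', hb', hab, ha, hb⟩ |
          ⟨ha, hb⟩ | ⟨ha, hb⟩)
        · exact absurd ha.symm (hdisj a' a.1 a.2)
        · rw [hg' a.1 a' a.2 ha' ha, hg' b.1 b' b.2 hb' hb]; exact hab
        · exact absurd ha.symm (hdisj v₁ a.1 a.2)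
        · exact absurd ha.symm (hdisj v₂ a.1 a.2)
  · show h (Sum.inl N.root) = M.root
    simpa [hh] using hgroot
  · intro v
    rcases v with a | a
    · show N.leafLabel a = M.leafLabel (g a); exact (hgleaf a).symm
    · show N.leafLabel a.1 = M.leafLabel (g' a.1); exact (hg'leaf a.1 a.2).symm
  · intro v
    rcases v with a | a
    · show N.retLabel a = M.retLabel (g a); exact (hgret a).symm
    · show N.retLabel a.1 = M.retLabel (g' a.1); exact (hg'ret a.1 a.2).symm

end IMLN
namespace IMLN

variable {X Λ : Type} {N : IMLN X Λ} {u v₁ v₂ : N.V}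

section Degrees

variable (hN : N.IsIMLN) (hu : N.IsMinRet u) (hv12 : v₁ ≠ v₂)
  (hv1 : N.Arc v₁ u) (hv2 : N.Arc v₂ u)
  (hpar : ∀ x : N.V, N.Arc x u → x = v₁ ∨ x = v₂)

theorem exp_inDeg_inl {a : N.V} (ha : a ≠ u) :
    (expUnfold N u v₁ v₂).inDeg (Sum.inl a) = N.inDeg a := by
  have hset : {x : (expUnfold N u v₁ v₂).V | (expUnfold N u v₁ v₂).Arc x (Sum.inl a)}
      = Sum.inl '' {c : N.V | N.Arc c a} := by
    ext x
    rcases x with c | c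
    · simp only [Set.mem_setOf_eq, expUnfold_arc_inl_inl, Set.mem_image,
        Sum.inl.injEq]
      constructor
      · rintro (⟨h1, _⟩ | ⟨rfl, rfl⟩)
        · exact ⟨c, h1, rfl⟩
        · exact absurd rfl ha
      · rintro ⟨c', h1, hc⟩
        obtain rfl := hc
        exact Or.inl ⟨h1, ha⟩
    · simp only [Set.mem_setOf_eq, Set.mem_image]
      constructor
      · intro h; exact absurd h (expUnfold_arc_inr_inl)
      · rintro ⟨c', _, hc⟩; exact absurd hc (by simp)
  rw [inDeg, hset, Set.ncard_image_of_injective _ Sum.inl_injective]; rfl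

theorem exp_inDeg_inl_u :
    (expUnfold N u v₁ v₂).inDeg (Sum.inl u) = 1 := by
  have hset : {x : (expUnfold N u v₁ v₂).V | (expUnfold N u v₁ v₂).Arc x (Sum.inl u)}
      = {Sum.inl v₁} := by
    ext x
    rcases x with c | c
    · simp only [Set.mem_setOf_eq, expUnfold_arc_inl_inl, Set.mem_singleton_iff,
        Sum.inl.injEq]
      constructor
      · rintro (⟨_, hc⟩ | ⟨rfl, _⟩)
        · exact absurd rfl hc
        · rfl
      · intro hc
        obtain rfl := hc
        exact Or.inr (by simp)
    · simp only [Set.mem_setOf_eq, Set.mem_singleton_iff]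
      constructor
      · intro h; exact absurd h (expUnfold_arc_inr_inl)
      · intro hc; exact absurd hc (by simp)
  rw [inDeg, hset, Set.ncard_singleton]

include hN hu in
theorem exp_inDeg_inr (b : {v : N.V // N.Reaches u v}) :
    (expUnfold N u v₁ v₂).inDeg (Sum.inr b) = 1 := by
  by_cases hbu : b.1 = u
  · have hset : {x : (expUnfold N u v₁ v₂).V |
        (expUnfold N u v₁ v₂).Arc x (Sum.inr b)} = {Sum.inl v₂} := by
      ext x
      rcases x with c | c
      · simp only [Set.mem_setOf_eq, expUnfold_arc_inl_inr, Set.mem_singleton_iff,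
          Sum.inl.injEq]
        constructor
        · rintro ⟨rfl, _⟩; rfl
        · intro hc
          obtain rfl := hc
          exact ⟨rfl, hbu⟩
      · simp only [Set.mem_setOf_eq, expUnfold_arc_inr_inr, Set.mem_singleton_iff]
        constructor
        · intro h
          rw [hbu] at h
          exact absurd h (not_arc_of_reaches hN c.2)
        · intro hc; exact absurd hc (by simp)
    rw [inDeg, hset, Set.ncard_singleton]
  · have hset : {x : (expUnfold N u v₁ v₂).V |
        (expUnfold N u v₁ v₂).Arc x (Sum.inr b)} =
        Sum.inr '' {c : {v : N.V // N.Reaches u v} | N.Arc c.1 b.1} := by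
      ext x
      rcases x with c | c
      · simp only [Set.mem_setOf_eq, expUnfold_arc_inl_inr, Set.mem_image]
        constructor
        · rintro ⟨_, hc⟩; exact absurd hc hbu
        · rintro ⟨c', _, hc⟩; exact absurd hc (by simp)
      · simp only [Set.mem_setOf_eq, expUnfold_arc_inr_inr, Set.mem_image,
          Sum.inr.injEq]
        constructor
        · intro h; exact ⟨c, h, rfl⟩
        · rintro ⟨c', h, hc⟩
          obtain rfl := hc
          exact h
    rw [inDeg, hset, Set.ncard_image_of_injective _ Sum.inr_injective]
    have hval : Subtype.val '' {c : {v : N.V // N.Reaches u v} | N.Arc c.1 b.1}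
        = {c : N.V | N.Arc c b.1} := by
      ext c
      simp only [Set.mem_image, Set.mem_setOf_eq, Subtype.exists]
      constructor
      · rintro ⟨c', hc', h, rfl⟩; exact h
      · intro h
        exact ⟨c, reaches_of_arc_below hN hu b.2 hbu h, h, rfl⟩
    have := Set.ncard_image_of_injective
      {c : {v : N.V // N.Reaches u v} | N.Arc c.1 b.1} Subtype.val_injective
    rw [hval] at this
    rw [← this]
    exact inDeg_below_minRet hN hu b.2 hbu

include hv12 hv1 hv2 hpar in
theorem exp_outDeg_inl (a : N.V) :
    (expUnfold N u v₁ v₂).outDeg (Sum.inl a) = N.outDeg a := by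
  classical
  set φ : N.V → (expUnfold N u v₁ v₂).V :=
    fun b => if b = u ∧ a = v₂ then Sum.inr ⟨u, Relation.ReflTransGen.refl⟩
      else Sum.inl b with hφ
  have hset : {x : (expUnfold N u v₁ v₂).V | (expUnfold N u v₁ v₂).Arc (Sum.inl a) x}
      = φ '' {b : N.V | N.Arc a b} := by
    ext x
    rcases x with c | c
    · simp only [Set.mem_setOf_eq, expUnfold_arc_inl_inl, Set.mem_image]
      constructor
      · rintro (⟨h1, hc⟩ | ⟨ha', hc'⟩)
        · exact ⟨c, h1, by simp [hφ, hc]⟩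
        · refine ⟨u, ?_, ?_⟩
          · rw [ha']; exact hv1
          · rw [hφ]
            have hneg : ¬ (u = u ∧ a = v₂) := fun h => hv12 (ha'.symm.trans h.2)
            show (if u = u ∧ a = v₂ then _ else _) = _
            rw [if_neg hneg]
            exact congrArg Sum.inl hc'.symm
      · rintro ⟨b, hb, hc⟩
        by_cases h : b = u ∧ a = v₂
        · rw [hφ] at hc; simp only [if_pos h] at hc; exact absurd hc (by simp)
        · rw [hφ] at hc
          simp only [if_neg h] at hc
          rw [Sum.inl.injEq] at hc
          subst hc
          by_cases hbu : b = u
          · subst hbu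
            rcases hpar a hb with rfl | rfl
            · exact Or.inr ⟨rfl, rfl⟩
            · exact absurd ⟨rfl, rfl⟩ h
          · exact Or.inl ⟨hb, hbu⟩
    · simp only [Set.mem_setOf_eq, expUnfold_arc_inl_inr, Set.mem_image]
      constructor
      · rintro ⟨rfl, hc⟩
        refine ⟨u, hv2, ?_⟩
        rw [hφ]
        have hpos : u = u ∧ a = a := ⟨rfl, rfl⟩
        show (if u = u ∧ a = a then _ else _) = _
        rw [if_pos hpos]
        exact congrArg Sum.inr (Subtype.ext (hc.symm : u = c.1))
      · rintro ⟨b, hb, hc⟩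
        by_cases h : b = u ∧ a = v₂
        · rw [hφ] at hc
          simp only [if_pos h] at hc
          rw [Sum.inr.injEq] at hc
          exact ⟨h.2, by rw [← hc]⟩
        · rw [hφ] at hc; simp only [if_neg h] at hc; exact absurd hc (by simp)
  have hinj : Set.InjOn φ {b : N.V | N.Arc a b} := by
    intro b hb b' hb' hbb
    rw [hφ] at hbb
    by_cases h : b = u ∧ a = v₂ <;> by_cases h' : b' = u ∧ a = v₂
    · rw [h.1, h'.1]
    · simp only [if_pos h, if_neg h'] at hbb; exact absurd hbb (by simp)
    · simp only [if_neg h, if_pos h'] at hbb; exact absurd hbb (by simp)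
    · simp only [if_neg h, if_neg h'] at hbb; exact Sum.inl_injective hbb
  rw [outDeg, hset, Set.ncard_image_of_injOn hinj]; rfl

theorem exp_outDeg_inr (b : {v : N.V // N.Reaches u v}) :
    (expUnfold N u v₁ v₂).outDeg (Sum.inr b) = N.outDeg b.1 := by
  have hset : {x : (expUnfold N u v₁ v₂).V | (expUnfold N u v₁ v₂).Arc (Sum.inr b) x}
      = Sum.inr '' {c : {v : N.V // N.Reaches u v} | N.Arc b.1 c.1} := by
    ext x
    rcases x with c | c
    · simp only [Set.mem_setOf_eq, Set.mem_image]
      constructor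
      · intro h; exact absurd h (expUnfold_arc_inr_inl)
      · rintro ⟨c', _, hc⟩; exact absurd hc (by simp)
    · simp only [Set.mem_setOf_eq, expUnfold_arc_inr_inr, Set.mem_image,
        Sum.inr.injEq]
      constructor
      · intro h; exact ⟨c, h, rfl⟩
      · rintro ⟨c', h, hc⟩
        obtain rfl := hc
        exact h
  rw [outDeg, hset, Set.ncard_image_of_injective _ Sum.inr_injective]
  have hval : Subtype.val '' {c : {v : N.V // N.Reaches u v} | N.Arc b.1 c.1}
      = {c : N.V | N.Arc b.1 c} := by
    ext c
    simp only [Set.mem_image, Set.mem_setOf_eq, Subtype.exists]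
    constructor
    · rintro ⟨c', hc', h, rfl⟩; exact h
    · intro h; exact ⟨c, b.2.tail h, h, rfl⟩
  have := Set.ncard_image_of_injective
    {c : {v : N.V // N.Reaches u v} | N.Arc b.1 c.1} Subtype.val_injective
  rw [hval] at this
  rw [← this]; rfl

end Degrees

end IMLN
namespace IMLN

variable {X Λ : Type} {N : IMLN X Λ} {u v₁ v₂ : N.V}

section Structure

variable (hN : N.IsIMLN) (hu : N.IsMinRet u) (hv12 : v₁ ≠ v₂)
  (hv1 : N.Arc v₁ u) (hv2 : N.Arc v₂ u)
  (hpar : ∀ x : N.V, N.Arc x u → x = v₁ ∨ x = v₂)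

include hv1 hv2 in
theorem exp_reaches_inl_of {z : N.V} (hz : ¬ N.Reaches z u)
    {x : (expUnfold N u v₁ v₂).V} (h : (expUnfold N u v₁ v₂).Reaches (Sum.inl z) x) :
    ∃ c : N.V, x = Sum.inl c ∧ N.Reaches z c := by
  induction h with
  | refl => exact ⟨z, rfl, Relation.ReflTransGen.refl⟩
  | tail _ harc ih =>
    obtain ⟨c, rfl, hzc⟩ := ih
    rename_i y _
    rcases y with b | b
    · rcases harc with ⟨h1, _⟩ | ⟨rfl, rfl⟩
      · exact ⟨b, rfl, hzc.tail h1⟩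
      · exact absurd (hzc.tail hv1) hz
    · obtain ⟨rfl, _⟩ := harc
      exact absurd (hzc.tail hv2) hz

include hN in
theorem exp_reaches_inl_lift {z c : N.V} (hnc : ¬ N.Reaches u c)
    (h : N.Reaches z c) : (expUnfold N u v₁ v₂).Reaches (Sum.inl z) (Sum.inl c) := by
  induction h using Relation.ReflTransGen.head_induction_on with
  | refl => exact Relation.ReflTransGen.refl
  | head harc hreach ih =>
    rename_i a b
    refine Relation.ReflTransGen.head ?_ ih
    have hbu : b ≠ u := fun hc => hnc (hc ▸ hreach)
    exact Or.inl ⟨harc, hbu⟩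

include hN in
theorem exp_reaches_from_u {a : N.V} (h : N.Reaches u a) :
    (expUnfold N u v₁ v₂).Reaches (Sum.inl u) (Sum.inl a) := by
  induction h with
  | refl => exact Relation.ReflTransGen.refl
  | tail hub harc ih =>
    rename_i b c
    refine ih.tail (Or.inl ⟨harc, fun hc => ?_⟩)
    exact hN.acyclic u (Relation.TransGen.tail' hub (hc ▸ harc))

theorem exp_reaches_inr {b c : {v : N.V // N.Reaches u v}} (h : N.Reaches b.1 c.1) :
    (expUnfold N u v₁ v₂).Reaches (Sum.inr b) (Sum.inr c) := by
  obtain ⟨b, hb⟩ := b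
  obtain ⟨c, hc⟩ := c
  simp only at h
  induction h with
  | refl => exact Relation.ReflTransGen.refl
  | tail hbd harc ih =>
    rename_i d e
    exact Relation.ReflTransGen.tail (ih (hb.trans hbd)) harc

include hN hu hv12 hv1 hv2 hpar in
theorem exp_connected (x : (expUnfold N u v₁ v₂).V) :
    (expUnfold N u v₁ v₂).Reaches (Sum.inl N.root) x := by
  have hnu1 : ¬ N.Reaches u v₁ := not_reaches_parent hN hv1
  have hnu2 : ¬ N.Reaches u v₂ := not_reaches_parent hN hv2
  have hru : (expUnfold N u v₁ v₂).Reaches (Sum.inl N.root) (Sum.inl u) := by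
    refine Relation.ReflTransGen.tail
      (exp_reaches_inl_lift hN hnu1 (hN.connected v₁)) ?_
    exact Or.inr ⟨rfl, rfl⟩
  rcases x with a | b
  · by_cases ha : N.Reaches u a
    · exact hru.trans (exp_reaches_from_u hN ha)
    · exact exp_reaches_inl_lift hN ha (hN.connected a)
  · have h2 : (expUnfold N u v₁ v₂).Reaches (Sum.inl N.root)
        (Sum.inr ⟨u, Relation.ReflTransGen.refl⟩) := by
      refine Relation.ReflTransGen.tail
        (exp_reaches_inl_lift hN hnu2 (hN.connected v₂)) ?_
      exact ⟨rfl, rfl⟩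
    exact h2.trans (exp_reaches_inr b.2)

include hN hu hv12 hv1 hv2 hpar in
theorem exp_isRet_iff (x : (expUnfold N u v₁ v₂).V) :
    (expUnfold N u v₁ v₂).IsRet x ↔
      ∃ r : N.V, x = Sum.inl r ∧ N.IsRet r ∧ r ≠ u := by
  constructor
  · intro hx
    rcases x with a | b
    · by_cases hau : a = u
      · subst hau
        rw [IsRet, exp_inDeg_inl_u] at hx
        exact absurd hx.1 (by norm_num)
      · rw [IsRet, exp_inDeg_inl hau, exp_outDeg_inl hv12 hv1 hv2 hpar] at hx
        exact ⟨a, rfl, hx, hau⟩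
    · rw [IsRet, exp_inDeg_inr hN hu] at hx
      exact absurd hx.1 (by norm_num)
  · rintro ⟨r, rfl, hr, hru⟩
    rw [IsRet, exp_inDeg_inl hru, exp_outDeg_inl hv12 hv1 hv2 hpar]
    exact hr

include hN hu hv12 hv1 hv2 hpar in
theorem exp_isIMLN : (expUnfold N u v₁ v₂).IsIMLN := by
  have huout : N.outDeg u = 1 := hu.1.2
  constructor
  · -- acyclic
    intro x hx
    set π : (expUnfold N u v₁ v₂).V → N.V := Sum.elim id Subtype.val with hπ
    have harc : ∀ a b : (expUnfold N u v₁ v₂).V,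
        (expUnfold N u v₁ v₂).Arc a b → N.Arc (π a) (π b) := by
      intro a b hab
      rcases a with a | a <;> rcases b with b | b
      · rcases hab with ⟨h1, _⟩ | ⟨rfl, rfl⟩
        · exact h1
        · exact hv1
      · obtain ⟨rfl, hb⟩ := hab
        show N.Arc a b.1
        rw [hb]; exact hv2
      · exact False.elim hab
      · exact hab
    have key : ∀ a b : (expUnfold N u v₁ v₂).V,
        Relation.TransGen (expUnfold N u v₁ v₂).Arc a b →
        Relation.TransGen N.Arc (π a) (π b) := by
      intro a b h
      induction h with
      | single h => exact Relation.TransGen.single (harc _ _ h)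
      | tail _ h ih => exact ih.tail (harc _ _ h)
    exact hN.acyclic (π x) (key x x hx)
  · -- rootIn
    show (expUnfold N u v₁ v₂).inDeg (Sum.inl N.root) = 0
    rw [exp_inDeg_inl (show N.root ≠ u from fun hc => ret_ne_root hN hu.1 hc.symm)]
    exact hN.rootIn
  · -- rootOut
    show (expUnfold N u v₁ v₂).outDeg (Sum.inl N.root) = 1 ∨ (expUnfold N u v₁ v₂).outDeg (Sum.inl N.root) = 2
    rw [exp_outDeg_inl hv12 hv1 hv2 hpar]
    exact hN.rootOut
  · -- uniqueRoot
    intro x hx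
    rcases x with a | b
    · by_cases hau : a = u
      · subst hau
        rw [exp_inDeg_inl_u] at hx
        exact absurd hx (by norm_num)
      · rw [exp_inDeg_inl hau] at hx
        exact congrArg Sum.inl (hN.uniqueRoot a hx)
    · rw [exp_inDeg_inr hN hu] at hx
      exact absurd hx (by norm_num)
  · exact exp_connected hN hu hv12 hv1 hv2 hpar
  · -- degrees
    intro x hx
    rcases x with a | b
    · by_cases hau : a = u
      · subst hau
        rw [exp_inDeg_inl_u, exp_outDeg_inl hv12 hv1 hv2 hpar]
        exact Or.inl ⟨rfl, Or.inr (Or.inl huout)⟩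
      · rw [exp_inDeg_inl hau, exp_outDeg_inl hv12 hv1 hv2 hpar]
        exact hN.degrees a (fun hc => hx (congrArg Sum.inl hc))
    · rw [exp_inDeg_inr hN hu, exp_outDeg_inr]
      by_cases hbu : b.1 = u
      · rw [hbu, huout]
        exact Or.inl ⟨rfl, Or.inr (Or.inl rfl)⟩
      · have hbroot : b.1 ≠ N.root := by
          intro hc
          have := inDeg_below_minRet hN hu b.2 hbu
          rw [hc, hN.rootIn] at this
          norm_num at this
        rcases hN.degrees b.1 hbroot with ⟨_, h2⟩ | hret
        · exact Or.inl ⟨rfl, h2⟩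
        · exact absurd (hu.2 b.1 hret b.2) hbu
  · -- leafSurj
    intro x
    obtain ⟨v, hv, hl⟩ := hN.leafSurj x
    refine ⟨Sum.inl v, ?_, hl⟩
    show (expUnfold N u v₁ v₂).outDeg (Sum.inl v) = 0
    rw [exp_outDeg_inl hv12 hv1 hv2 hpar]
    exact hv
  · -- retInj
    intro x y hx hy hl
    obtain ⟨r, rfl, hr, hru⟩ := (exp_isRet_iff hN hu hv12 hv1 hv2 hpar x).1 hx
    obtain ⟨s, rfl, hs, hsu⟩ := (exp_isRet_iff hN hu hv12 hv1 hv2 hpar y).1 hy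
    exact congrArg Sum.inl (hN.retInj r s hr hs hl)
  · -- retElemLabels
    intro x y hx hy
    obtain ⟨r, rfl, hr, hru⟩ := (exp_isRet_iff hN hu hv12 hv1 hv2 hpar x).1 hx
    have hlru : N.retLabel r ≠ N.retLabel u := fun hc => hru (hN.retInj r u hr hu.1 hc)
    rcases y with a | b
    · by_cases hau : a = u
      · subst hau
        exact hlru
      · rw [IsElem, exp_inDeg_inl hau, exp_outDeg_inl hv12 hv1 hv2 hpar] at hy
        exact hN.retElemLabels r a hr hy
    · rw [IsElem, exp_inDeg_inr hN hu, exp_outDeg_inr] at hy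
      by_cases hbu : b.1 = u
      · show N.retLabel r ≠ N.retLabel b.1
        rw [hbu]
        exact hlru
      · have : N.IsElem b.1 := ⟨by rw [inDeg_below_minRet hN hu b.2 hbu], hy.2⟩
        exact hN.retElemLabels r b.1 hr this

include hN hu hv12 hv1 hv2 hpar in
theorem exp_isMinRet {w : N.V} (hw : N.IsMinRet w) (hwu : w ≠ u) :
    (expUnfold N u v₁ v₂).IsMinRet (Sum.inl w) := by
  have hnwu : ¬ N.Reaches w u := fun hc => hwu ((hw.2 u hu.1 hc).symm ▸ rfl)
  constructor
  · exact (exp_isRet_iff hN hu hv12 hv1 hv2 hpar _).2 ⟨w, rfl, hw.1, hwu⟩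
  · intro x hx hreach
    obtain ⟨r, rfl, hr, hru⟩ := (exp_isRet_iff hN hu hv12 hv1 hv2 hpar x).1 hx
    obtain ⟨c, hc, hwc⟩ := exp_reaches_inl_of hv1 hv2 hnwu hreach
    obtain rfl := Sum.inl_injective hc
    exact congrArg Sum.inl (hw.2 r hr hwc)

theorem exp_arc_to_inl {w : N.V} (hwu : w ≠ u) (x : (expUnfold N u v₁ v₂).V) :
    (expUnfold N u v₁ v₂).Arc x (Sum.inl w) ↔ ∃ c, x = Sum.inl c ∧ N.Arc c w := by
  rcases x with c | c
  · simp only [expUnfold_arc_inl_inl, Sum.inl.injEq]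
    constructor
    · rintro (⟨h1, _⟩ | ⟨rfl, rfl⟩)
      · exact ⟨c, rfl, h1⟩
      · exact absurd rfl hwu
    · rintro ⟨c', hc, h⟩
      obtain rfl := hc
      exact Or.inl ⟨h, hwu⟩
  · constructor
    · intro h; exact False.elim h
    · rintro ⟨c', hc, _⟩; exact absurd hc (by simp)

end Structure

end IMLN
namespace IMLN

variable {X Λ : Type} {N : IMLN X Λ}

/-- The parts below two distinct minimal reticulations are disjoint. -/
theorem below_disjoint (hN : N.IsIMLN) {u w : N.V} (hu : N.IsMinRet u)
    (hw : N.IsMinRet w) (hne : u ≠ w) :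
    ∀ c : N.V, N.Reaches w c → ¬ N.Reaches u c := by
  intro c hwc
  induction hwc with
  | refl => exact minRet_not_reaches_ret hN hu hw.1 (Ne.symm hne)
  | tail hwb harc ih =>
    rename_i b c'
    intro huc
    have hcu : c' ≠ u := by
      rintro rfl
      exact minRet_not_reaches_ret hN hw hu.1 hne (hwb.tail harc)
    exact ih (reaches_of_arc_below hN hu huc hcu harc)

theorem sym_extract {u v₁ v₂ z c : N.V} (hv1 : N.Arc v₁ u) (hv2 : N.Arc v₂ u)
    (hz : ¬ N.Reaches z u)
    (h : (expUnfold N u v₁ v₂).Reaches (Sum.inl z) (Sum.inl c)) : N.Reaches z c := by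
  obtain ⟨c', hc, hr⟩ := exp_reaches_inl_of hv1 hv2 hz h
  obtain rfl := Sum.inl_injective hc
  exact hr

theorem sym_not_inr {u v₁ v₂ z : N.V} {s : {v : N.V // N.Reaches u v}}
    (hv1 : N.Arc v₁ u) (hv2 : N.Arc v₂ u) (hz : ¬ N.Reaches z u)
    (h : (expUnfold N u v₁ v₂).Reaches (Sum.inl z) (Sum.inr s)) : False := by
  obtain ⟨c, hc, -⟩ := exp_reaches_inl_of hv1 hv2 hz h
  exact absurd hc (by simp)

/-- Unfolding at two distinct minimal reticulations commutes (on explicit models). -/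
theorem exp_double_symm {u w p₁ p₂ q₁ q₂ : N.V}
    (hN : N.IsIMLN) (hu : N.IsMinRet u) (hw : N.IsMinRet w) (hne : u ≠ w)
    (hp12 : p₁ ≠ p₂) (hp1 : N.Arc p₁ u) (hp2 : N.Arc p₂ u)
    (hq12 : q₁ ≠ q₂) (hq1 : N.Arc q₁ w) (hq2 : N.Arc q₂ w) :
    RIsom (expUnfold (expUnfold N u p₁ p₂) (Sum.inl w) (Sum.inl q₁) (Sum.inl q₂))
          (expUnfold (expUnfold N w q₁ q₂) (Sum.inl u) (Sum.inl p₁) (Sum.inl p₂)) := by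
  have hnuw : ¬ N.Reaches u w := minRet_not_reaches_ret hN hu hw.1 (Ne.symm hne)
  have hnwu : ¬ N.Reaches w u := minRet_not_reaches_ret hN hw hu.1 hne
  have hdisj_wu : ∀ c : N.V, N.Reaches w c → ¬ N.Reaches u c :=
    below_disjoint hN hu hw hne
  have hdisj_uw : ∀ c : N.V, N.Reaches u c → ¬ N.Reaches w c :=
    below_disjoint hN hw hu (Ne.symm hne)
  set Eu := expUnfold N u p₁ p₂ with hEu
  set Ew := expUnfold N w q₁ q₂ with hEw
  -- forward map
  set F : (expUnfold Eu (Sum.inl w) (Sum.inl q₁) (Sum.inl q₂)).V →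
      (expUnfold Ew (Sum.inl u) (Sum.inl p₁) (Sum.inl p₂)).V :=
    fun x => match x with
    | Sum.inl (Sum.inl a) => Sum.inl (Sum.inl a)
    | Sum.inl (Sum.inr s) =>
        Sum.inr ⟨Sum.inl s.1, exp_reaches_inl_lift hN (hdisj_uw s.1 s.2) s.2⟩
    | Sum.inr ⟨Sum.inl c, h⟩ =>
        Sum.inl (Sum.inr ⟨c, sym_extract hp1 hp2 hnwu h⟩)
    | Sum.inr ⟨Sum.inr s, h⟩ => False.elim (sym_not_inr hp1 hp2 hnwu h)
    with hF
  set G : (expUnfold Ew (Sum.inl u) (Sum.inl p₁) (Sum.inl p₂)).V →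
      (expUnfold Eu (Sum.inl w) (Sum.inl q₁) (Sum.inl q₂)).V :=
    fun x => match x with
    | Sum.inl (Sum.inl a) => Sum.inl (Sum.inl a)
    | Sum.inl (Sum.inr s) =>
        Sum.inr ⟨Sum.inl s.1, exp_reaches_inl_lift hN (hdisj_wu s.1 s.2) s.2⟩
    | Sum.inr ⟨Sum.inl c, h⟩ =>
        Sum.inl (Sum.inr ⟨c, sym_extract hq1 hq2 hnuw h⟩)
    | Sum.inr ⟨Sum.inr s, h⟩ => False.elim (sym_not_inr hq1 hq2 hnuw h)
    with hG
  have hleft : ∀ x, G (F x) = x := by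
    rintro ((a | s) | ⟨c | s, h⟩)
    · rfl
    · exact congrArg (fun z => Sum.inl (Sum.inr z)) (Subtype.ext rfl)
    · exact congrArg Sum.inr (Subtype.ext rfl)
    · exact False.elim (sym_not_inr hp1 hp2 hnwu h)
  have hright : ∀ x, F (G x) = x := by
    rintro ((a | s) | ⟨c | s, h⟩)
    · rfl
    · exact congrArg (fun z => Sum.inl (Sum.inr z)) (Subtype.ext rfl)
    · exact congrArg Sum.inr (Subtype.ext rfl)
    · exact False.elim (sym_not_inr hq1 hq2 hnuw h)
  refine ⟨⟨F, G, hleft, hright⟩, ?_, rfl, ?_, ?_⟩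
  · -- arcs
    rintro ((a | s) | ⟨c | s, h⟩) ((b | s') | ⟨c' | s', h'⟩)
    -- A → A
    · show (Eu.Arc (Sum.inl a) (Sum.inl b) ∧ Sum.inl b ≠ Sum.inl w) ∨
        (Sum.inl a = Sum.inl q₁ ∧ Sum.inl b = Sum.inl w) ↔
        (Ew.Arc (Sum.inl a) (Sum.inl b) ∧ Sum.inl b ≠ Sum.inl u) ∨
        (Sum.inl a = Sum.inl p₁ ∧ Sum.inl b = Sum.inl u)
      simp only [hEu, hEw, expUnfold_arc_inl_inl, Sum.inl.injEq, ne_eq]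
      constructor
      · rintro (⟨(⟨h1, h2⟩ | ⟨rfl, rfl⟩), h3⟩ | ⟨rfl, rfl⟩)
        · exact Or.inl ⟨Or.inl ⟨h1, h3⟩, h2⟩
        · exact Or.inr ⟨rfl, rfl⟩
        · exact Or.inl ⟨Or.inr ⟨rfl, rfl⟩, Ne.symm hne⟩
      · rintro (⟨(⟨h1, h2⟩ | ⟨rfl, rfl⟩), h3⟩ | ⟨rfl, rfl⟩)
        · exact Or.inl ⟨Or.inl ⟨h1, h3⟩, h2⟩
        · exact Or.inr ⟨rfl, rfl⟩
        · exact Or.inl ⟨Or.inr ⟨rfl, rfl⟩, hne⟩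
    -- A → B
    · show (Eu.Arc (Sum.inl a) (Sum.inr s') ∧ Sum.inr s' ≠ Sum.inl w) ∨
        (Sum.inl a = Sum.inl q₁ ∧ Sum.inr s' = Sum.inl w) ↔
        (Sum.inl a = Sum.inl p₂ ∧ (Sum.inl s'.1 : Ew.V) = Sum.inl u)
      simp only [hEu, hEw, expUnfold_arc_inl_inr, Sum.inl.injEq, ne_eq]
      constructor
      · rintro (⟨⟨rfl, h2⟩, _⟩ | ⟨_, hc⟩)
        · exact ⟨rfl, h2⟩
        · exact absurd hc (by simp)
      · rintro ⟨rfl, h2⟩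
        exact Or.inl ⟨⟨rfl, h2⟩, by simp⟩
    -- A → C
    · show (Sum.inl a : Eu.V) = Sum.inl q₂ ∧ (Sum.inl c' : Eu.V) = Sum.inl w ↔
        (Ew.Arc (Sum.inl a) (Sum.inr ⟨c', sym_extract hp1 hp2 hnwu h'⟩) ∧
          (Sum.inr ⟨c', sym_extract hp1 hp2 hnwu h'⟩ : Ew.V) ≠ Sum.inl u) ∨
        ((Sum.inl a : Ew.V) = Sum.inl p₁ ∧
          (Sum.inr ⟨c', sym_extract hp1 hp2 hnwu h'⟩ : Ew.V) = Sum.inl u)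
      simp only [hEu, hEw, expUnfold_arc_inl_inr, Sum.inl.injEq, Sum.inr.injEq, ne_eq]
      constructor
      · rintro ⟨h1, h2⟩
        exact Or.inl ⟨⟨h1, h2⟩, by simp⟩
      · rintro (⟨⟨rfl, h2⟩, _⟩ | ⟨_, hc⟩)
        · exact ⟨rfl, h2⟩
        · exact absurd hc (by simp)
    · exact False.elim (sym_not_inr hp1 hp2 hnwu h')
    · simp only [Equiv.coe_fn_mk, hF, hG, hEu, hEw, expUnfold_arc_inl_inl, expUnfold_arc_inl_inr,
        expUnfold_arc_inr_inr, expUnfold_arc_inr_inl, expArc, Sum.inl.injEq, Sum.inr.injEq,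
        ne_eq, Subtype.mk.injEq, reduceCtorEq, false_and, and_false, or_false,
        false_or, and_true, true_and, not_false_iff, iff_self]
    · simp only [Equiv.coe_fn_mk, hF, hG, hEu, hEw, expUnfold_arc_inl_inl, expUnfold_arc_inl_inr,
        expUnfold_arc_inr_inr, expUnfold_arc_inr_inl, expArc, Sum.inl.injEq, Sum.inr.injEq,
        ne_eq, Subtype.mk.injEq, reduceCtorEq, false_and, and_false, or_false,
        false_or, and_true, true_and, not_false_iff, iff_self]
      constructor
      · intro h1
        exact Or.inl ⟨h1, fun hcc => hnuw (hcc ▸ s'.2)⟩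
      · rintro (⟨h1, -⟩ | ⟨-, hc⟩)
        · exact h1
        · exact absurd (hc ▸ s'.2) hnuw
    · simp only [Equiv.coe_fn_mk, hF, hG, hEu, hEw, expUnfold_arc_inl_inl, expUnfold_arc_inl_inr,
        expUnfold_arc_inr_inr, expUnfold_arc_inr_inl, expArc, Sum.inl.injEq, Sum.inr.injEq,
        ne_eq, Subtype.mk.injEq, reduceCtorEq, false_and, and_false, or_false,
        false_or, and_true, true_and, not_false_iff, iff_self]
    · exact False.elim (sym_not_inr hp1 hp2 hnwu h')
    · simp only [Equiv.coe_fn_mk, hF, hG, hEu, hEw, expUnfold_arc_inl_inl, expUnfold_arc_inl_inr,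
        expUnfold_arc_inr_inr, expUnfold_arc_inr_inl, expArc, Sum.inl.injEq, Sum.inr.injEq,
        ne_eq, Subtype.mk.injEq, reduceCtorEq, false_and, and_false, or_false,
        false_or, and_true, true_and, not_false_iff, iff_self]
    · simp only [Equiv.coe_fn_mk, hF, hG, hEu, hEw, expUnfold_arc_inl_inl, expUnfold_arc_inl_inr,
        expUnfold_arc_inr_inr, expUnfold_arc_inr_inl, expArc, Sum.inl.injEq, Sum.inr.injEq,
        ne_eq, Subtype.mk.injEq, reduceCtorEq, false_and, and_false, or_false,
        false_or, and_true, true_and, not_false_iff, iff_self]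
    · simp only [Equiv.coe_fn_mk, hF, hG, hEu, hEw, expUnfold_arc_inl_inl, expUnfold_arc_inl_inr,
        expUnfold_arc_inr_inr, expUnfold_arc_inr_inl, expArc, Sum.inl.injEq, Sum.inr.injEq,
        ne_eq, Subtype.mk.injEq, reduceCtorEq, false_and, and_false, or_false,
        false_or, and_true, true_and, not_false_iff, iff_self]
      constructor
      · rintro (⟨h1, -⟩ | ⟨-, hc⟩)
        · exact h1
        · exact absurd (hc ▸ sym_extract hp1 hp2 hnwu h') hnwu
      · intro h1
        exact Or.inl ⟨h1, fun hc => hnwu (hc ▸ sym_extract hp1 hp2 hnwu h')⟩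
    · exact False.elim (sym_not_inr hp1 hp2 hnwu h')
    · exact False.elim (sym_not_inr hp1 hp2 hnwu h)
    · exact False.elim (sym_not_inr hp1 hp2 hnwu h)
    · exact False.elim (sym_not_inr hp1 hp2 hnwu h)
    · exact False.elim (sym_not_inr hp1 hp2 hnwu h)
  · -- leaf labels
    rintro ((a | s) | ⟨c | s, h⟩)
    · rfl
    · rfl
    · rfl
    · exact False.elim (sym_not_inr hp1 hp2 hnwu h)
  · -- ret labels
    rintro ((a | s) | ⟨c | s, h⟩)
    · rfl
    · rfl
    · rfl
    · exact False.elim (sym_not_inr hp1 hp2 hnwu h)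

end IMLN
namespace IMLN

variable {X Λ : Type} {N : IMLN X Λ}

/-- Swapping the roles of the two parents gives isomorphic unfoldings. -/
theorem exp_swap {u p q : N.V} (hN : N.IsIMLN) (hu : N.IsMinRet u)
    (hp : N.Arc p u) (hq : N.Arc q u) :
    RIsom (expUnfold N u p q) (expUnfold N u q p) := by
  classical
  have hnr : ∀ a : N.V, N.Reaches u a → ¬ N.Arc a u :=
    fun a ha => not_arc_of_reaches hN ha
  have hnp : ¬ N.Reaches u p := not_reaches_parent hN hp
  have hnq : ¬ N.Reaches u q := not_reaches_parent hN hq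
  set F : (expUnfold N u p q).V → (expUnfold N u q p).V :=
    fun x => match x with
    | Sum.inl a => if h : N.Reaches u a then Sum.inr ⟨a, h⟩ else Sum.inl a
    | Sum.inr b => Sum.inl b.1
    with hF
  have hinv : ∀ x, F (F x) = x := by
    rintro (a | b)
    · by_cases h : N.Reaches u a
      · simp only [hF, dif_pos h]
      · simp only [hF, dif_neg h]
    · simp only [hF, dif_pos b.2]
  refine ⟨⟨F, F, hinv, hinv⟩, ?_, ?_, ?_, ?_⟩
  · rintro (a | a) (b | b)
    · show (N.Arc a b ∧ b ≠ u) ∨ (a = p ∧ b = u) ↔ _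
      by_cases ha : N.Reaches u a <;> by_cases hb : N.Reaches u b <;>
        simp only [Equiv.coe_fn_mk, hF, dif_pos, dif_neg, ha, hb]
      · show _ ↔ N.Arc a b
        constructor
        · rintro (⟨h1, _⟩ | ⟨rfl, rfl⟩)
          · exact h1
          · exact (hnr a ha hp).elim
        · intro h1
          refine Or.inl ⟨h1, fun hc => ?_⟩
          exact hnr a ha (hc ▸ h1)
      · show _ ↔ False
        constructor
        · rintro (⟨h1, hc⟩ | ⟨rfl, rfl⟩)
          · exact hb (ha.tail h1)
          · exact hb Relation.ReflTransGen.refl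
        · exact False.elim
      · show _ ↔ (a = p ∧ b = u)
        constructor
        · rintro (⟨h1, h2⟩ | hh)
          · exact absurd (reaches_of_arc_below hN hu hb h2 h1) ha
          · exact hh
        · exact Or.inr
      · show _ ↔ (N.Arc a b ∧ b ≠ u) ∨ (a = q ∧ b = u)
        constructor
        · rintro (⟨h1, h2⟩ | ⟨rfl, rfl⟩)
          · exact Or.inl ⟨h1, h2⟩
          · exact absurd Relation.ReflTransGen.refl hb
        · rintro (⟨h1, h2⟩ | ⟨rfl, rfl⟩)
          · exact Or.inl ⟨h1, h2⟩
          · exact absurd Relation.ReflTransGen.refl hb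
    · show (a = q ∧ b.1 = u) ↔ _
      by_cases ha : N.Reaches u a <;>
        simp only [Equiv.coe_fn_mk, hF, dif_pos, dif_neg, ha]
      · show _ ↔ False
        constructor
        · rintro ⟨rfl, _⟩
          exact hnq ha
        · exact False.elim
      · show _ ↔ (N.Arc a b.1 ∧ b.1 ≠ u) ∨ (a = q ∧ b.1 = u)
        constructor
        · exact fun h => Or.inr h
        · rintro (⟨h1, h2⟩ | hh)
          · exact absurd (reaches_of_arc_below hN hu b.2 h2 h1) ha
          · exact hh
    · show False ↔ _
      by_cases hb : N.Reaches u b <;>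
        simp only [Equiv.coe_fn_mk, hF, dif_pos, dif_neg, hb]
      · show _ ↔ (a.1 = p ∧ b = u)
        constructor
        · exact False.elim
        · rintro ⟨rfl, rfl⟩
          exact hnp a.2
      · show _ ↔ (N.Arc a.1 b ∧ b ≠ u) ∨ (a.1 = q ∧ b = u)
        constructor
        · exact False.elim
        · rintro (⟨h1, h2⟩ | ⟨rfl, rfl⟩)
          · exact hb (a.2.tail h1)
          · exact hb Relation.ReflTransGen.refl
    · show N.Arc a.1 b.1 ↔ _
      simp only [Equiv.coe_fn_mk, hF]
      show _ ↔ (N.Arc a.1 b.1 ∧ b.1 ≠ u) ∨ (a.1 = q ∧ b.1 = u)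
      constructor
      · intro h1
        refine Or.inl ⟨h1, fun hc => ?_⟩
        have h2 := h1
        rw [hc] at h2
        exact hnr a.1 a.2 h2
      · rintro (⟨h1, _⟩ | ⟨h1, h2⟩)
        · exact h1
        · exfalso
          apply hnq
          rw [← h1]
          exact a.2
  · show F (Sum.inl N.root) = Sum.inl N.root
    have : ¬ N.Reaches u N.root := by
      intro hc
      exact ret_ne_root hN hu.1 (eq_root_of_reaches_root hN hc)
    simp only [hF, dif_neg this]
  · rintro (a | a)
    · by_cases h : N.Reaches u a
      · show N.leafLabel a = (expUnfold N u q p).leafLabel (F (Sum.inl a))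
        simp only [hF, dif_pos h]
        rfl
      · show N.leafLabel a = (expUnfold N u q p).leafLabel (F (Sum.inl a))
        simp only [hF, dif_neg h]
        rfl
    · rfl
  · rintro (a | a)
    · by_cases h : N.Reaches u a
      · show N.retLabel a = (expUnfold N u q p).retLabel (F (Sum.inl a))
        simp only [hF, dif_pos h]
        rfl
      · show N.retLabel a = (expUnfold N u q p).retLabel (F (Sum.inl a))
        simp only [hF, dif_neg h]
        rfl
    · rfl

end IMLN
namespace IMLN

variable {X Λ : Type} {N : IMLN X Λ}

theorem parents_char (hK : N.IsIMLN) {w a b : N.V} (hret : N.IsRet w) (hab : a ≠ b)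
    (ha : N.Arc a w) (hb : N.Arc b w) : ∀ x : N.V, N.Arc x w → x = a ∨ x = b := by
  obtain ⟨p, q, hpq, hp, hq, hall⟩ := parents_of_ret hK hret
  intro x hx
  rcases hall a ha with h1 | h1 <;> rcases hall b hb with h2 | h2 <;>
    rcases hall x hx with h3 | h3 <;>
    first
      | (exact absurd (h1.trans h2.symm) hab)
      | (exact Or.inl (h3.trans h1.symm))
      | (exact Or.inr (h3.trans h2.symm))

theorem UnfoldStep.exp {K M : IMLN X Λ} {l : Λ} (hK : K.IsIMLN)
    (hs : UnfoldStep K M l) :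
    ∃ u p q : K.V, K.IsMinRet u ∧ K.retLabel u = l ∧ p ≠ q ∧ K.Arc p u ∧ K.Arc q u ∧
      (∀ x : K.V, K.Arc x u → x = p ∨ x = q) ∧ RIsom (expUnfold K u p q) M := by
  obtain ⟨u, humin, hul, hunf⟩ := hs
  obtain ⟨v₁, v₂, h12, h1, h2, -, hiso⟩ := hunf.risom_exp
  exact ⟨u, v₁, v₂, humin, hul, h12, h1, h2, parents_char hK humin.1 h12 h1 h2, hiso⟩

theorem UnfoldStep.isIMLN {K M : IMLN X Λ} {l : Λ} (hK : K.IsIMLN)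
    (hs : UnfoldStep K M l) : M.IsIMLN := by
  obtain ⟨u, p, q, hm, -, hpq, hp, hq, hpar, hiso⟩ := hs.exp hK
  exact hiso.isIMLN (exp_isIMLN hK hm hpq hp hq hpar)

theorem unfoldStep_unique {K M₁ M₂ : IMLN X Λ} {l : Λ} (hK : K.IsIMLN)
    (h₁ : UnfoldStep K M₁ l) (h₂ : UnfoldStep K M₂ l) : RIsom M₁ M₂ := by
  obtain ⟨u, p, q, hm, hul, hpq, hp, hq, hpar, hiso⟩ := h₁.exp hK
  obtain ⟨u', p', q', hm', hul', hpq', hp', hq', hpar', hiso'⟩ := h₂.exp hK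
  obtain rfl : u' = u := hK.retInj u' u hm'.1 hm.1 (by rw [hul', hul])
  refine hiso.symm.trans ?_
  rcases hpar p' hp' with hpp | hpq2 <;> rcases hpar q' hq' with hqp | hqq
  · exact absurd (hpp.trans hqp.symm) hpq'
  · rw [hpp, hqq] at hiso'
    exact hiso'
  · rw [hpq2, hqp] at hiso'
    exact (exp_swap hK hm hp hq).trans hiso'
  · exact absurd (hpq2.trans hqq.symm) hpq'

/-- A compatible unfolding at a given label can be moved to the front of a sequence. -/
theorem move (l : Λ) : ∀ (qs : List Λ) (K M' : IMLN X Λ), K.IsIMLN →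
    (∃ w : K.V, K.IsMinRet w ∧ K.retLabel w = l) → IsUnfoldSeq K qs M' → l ∈ qs →
    ∃ r : List Λ, qs.Perm (l :: r) ∧ ∃ M'' : IMLN X Λ,
      IsUnfoldSeq K (l :: r) M'' ∧ RIsom M' M'' := by
  intro qs
  induction qs with
  | nil => intro K M' _ _ _ hmem; exact absurd hmem (List.not_mem_nil (a := l))
  | cons l₂ q' ih =>
    intro K M' hK hex hseq hmem
    by_cases hl : l₂ = l
    · subst hl
      exact ⟨q', List.Perm.refl _, M', hseq, RIsom.refl M'⟩
    · cases hseq with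
      | cons hstep htail =>
        have hmem' : l ∈ q' := by
          rcases List.mem_cons.1 hmem with h | h
          · exact absurd h.symm hl
          · exact h
        obtain ⟨u₂, p, q2, hu₂min, hu₂l, hpq, hp, hq, hpar, hiso⟩ := hstep.exp hK
        obtain ⟨w, hwmin, hwl⟩ := hex
        have hwu : w ≠ u₂ := fun hc => hl (by rw [← hu₂l, ← hc, hwl])
        have hEmin : (expUnfold K u₂ p q2).IsMinRet (Sum.inl w) :=
          exp_isMinRet hK hu₂min hpq hp hq hpar hwmin hwu
        have hE : (expUnfold K u₂ p q2).IsIMLN := exp_isIMLN hK hu₂min hpq hp hq hpar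
        obtain ⟨M₁, hseqE, hisoM1⟩ := htail.transport hiso.symm
        obtain ⟨r', hpr', M₂, hseq₂, hiso₂⟩ :=
          ih (expUnfold K u₂ p q2) M₁ hE ⟨Sum.inl w, hEmin, hwl⟩ hseqE hmem'
        cases hseq₂ with
        | cons hstep₂ htail₂ =>
          obtain ⟨z, hzmin, hzl, hz⟩ := hstep₂
          have hzw : z = Sum.inl w := hE.retInj z (Sum.inl w) hzmin.1 hEmin.1
            (by rw [hzl, expUnfold_retLabel_inl, hwl])
          subst hzw
          obtain ⟨P₁, P₂, hP12, hP1, hP2, -, hisoE'⟩ := hz.risom_exp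
          obtain ⟨w₁, rfl, hw1⟩ := (exp_arc_to_inl hwu _).1 hP1
          obtain ⟨w₂, rfl, hw2⟩ := (exp_arc_to_inl hwu _).1 hP2
          have hw12 : w₁ ≠ w₂ := fun hc => hP12 (congrArg Sum.inl hc)
          obtain ⟨M₃, hseqD, hisoM3⟩ := htail₂.transport hisoE'.symm
          have hsym := exp_double_symm hK hu₂min hwmin (Ne.symm hwu) hpq hp hq
            hw12 hw1 hw2
          obtain ⟨M₄, hseqD₂, hisoM4⟩ := hseqD.transport hsym
          have hparW := parents_char hK hwmin.1 hw12 hw1 hw2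
          refine ⟨l₂ :: r', (hpr'.cons l₂).trans (List.Perm.swap l l₂ r'), M₄, ?_, ?_⟩
          · refine IsUnfoldSeq.cons ⟨w, hwmin, hwl, isUnfoldAt_expUnfold K hw12 hw1 hw2⟩ ?_
            refine IsUnfoldSeq.cons ?_ hseqD₂
            refine ⟨Sum.inl u₂,
              exp_isMinRet hK hwmin hw12 hw1 hw2 hparW hu₂min (Ne.symm hwu),
              by rw [expUnfold_retLabel_inl]; exact hu₂l, ?_⟩
            exact isUnfoldAt_expUnfold (expUnfold K w w₁ w₂)
              (fun hc => hpq (Sum.inl_injective hc))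
              (Or.inl ⟨hp, Ne.symm hwu⟩) (Or.inl ⟨hq, Ne.symm hwu⟩)
          · exact hisoM1.trans (hiso₂.trans (hisoM3.trans hisoM4))

/-- Permuted compatible sequences give isomorphic unfoldings. -/
theorem key : ∀ (n : ℕ) (ls ls' : List Λ) (K M M' : IMLN X Λ), ls.length ≤ n →
    K.IsIMLN → ls.Perm ls' → IsUnfoldSeq K ls M → IsUnfoldSeq K ls' M' →
    RIsom M M' := by
  intro n
  induction n with
  | zero =>
    intro ls ls' K M M' hlen hK hperm hM hM'
    obtain rfl : ls = [] := List.eq_nil_of_length_eq_zero (Nat.le_zero.1 hlen)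
    obtain rfl : ls' = [] := hperm.symm.eq_nil
    cases hM
    cases hM'
    exact RIsom.refl K
  | succ n ih =>
    intro ls ls' K M M' hlen hK hperm hM hM'
    cases hM with
    | nil =>
      obtain rfl : ls' = [] := hperm.symm.eq_nil
      cases hM'
      exact RIsom.refl K
    | cons hstep htail =>
      rename_i K₁ l t
      have hl_mem : l ∈ ls' := hperm.subset (List.mem_cons_self (a := l) (l := t))
      obtain ⟨w0, hw0min, hw0l⟩ : ∃ w : K.V, K.IsMinRet w ∧ K.retLabel w = l := by
        obtain ⟨u, hm, hul, -⟩ := hstep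
        exact ⟨u, hm, hul⟩
      obtain ⟨r, hpr, M'', hseq2, hiso2⟩ :=
        move l ls' K M' hK ⟨w0, hw0min, hw0l⟩ hM' hl_mem
      cases hseq2 with
      | cons hstep₂ htail₂ =>
        have hKK := unfoldStep_unique hK hstep hstep₂
        obtain ⟨M₃, hseq3, hiso3⟩ := htail₂.transport hKK.symm
        have htr : t.Perm r := (hperm.trans hpr).cons_inv
        have hK₁ : K₁.IsIMLN := hstep.isIMLN hK
        have hlen' : t.length ≤ n := by
          simp only [List.length_cons] at hlen
          omega
        have hMM₃ : RIsom M M₃ := ih t r K₁ M M₃ hlen' hK₁ htr htail hseq3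
        exact hMM₃.trans (hiso3.symm.trans hiso2.symm)

end IMLN
/-- **Corollary (unf-order).** Let `N` be an IMLN and let `us`, `vs` be two
equivalent compatible sequences of elements of `R(N)` (same set of nodes), with
associated sequences of unfoldings ending in `M` and `M'` respectively.  Then `M`
and `M'` are isomorphic. -/
theorem IMLN.equivalent_unfold_seq_isom (X Λ : Type) (N : IMLN X Λ) (hN : N.IsIMLN)
    (us vs : List N.V)
    (hus : ∀ u ∈ us, N.IsRet u) (hvs : ∀ u ∈ vs, N.IsRet u)
    (hndus : us.Nodup) (hndvs : vs.Nodup)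
    (hequiv : ∀ u : N.V, u ∈ us ↔ u ∈ vs)
    (M M' : IMLN X Λ)
    (hM : IMLN.IsUnfoldSeq N (us.map N.retLabel) M)
    (hM' : IMLN.IsUnfoldSeq N (vs.map N.retLabel) M') :
    IMLN.Isom M M' := by
  have hperm : us.Perm vs := (List.perm_ext_iff_of_nodup hndus hndvs).2 hequiv
  exact (IMLN.key (us.map N.retLabel).length _ _ N M M' le_rfl hN
    (hperm.map N.retLabel) hM hM').isom
end

section
/- Let N be a pseudo-network and u ∈ R_min(N). Then F(U(N, u), u) = N, i.e. folding the unfolded IMLN of N at u back at u recovers N. -/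
/-- **Lemma (folding).** Let `N` be a pseudo-network and `u ∈ R_min(N)`.  Then
`F(U(N,u), u) = N`: folding the unfolded IMLN of `N` at `u` back at (a copy of)
`u` recovers `N`, up to isomorphism. -/
theorem IMLN.fold_unfold (X Λ : Type) (N : IMLN X Λ) (hN : N.IsIMLN)
    (hps : IMLN.IsPseudo N) (u : N.V) (hu : N.IsMinRet u)
    (N' : IMLN X Λ) (hU : IMLN.IsUnfoldAt N N' u)
    (w : N'.V) (hw : IMLN.IsEMax N' w) (hlw : N'.retLabel w = N.retLabel u)
    (M : IMLN X Λ) (hF : IMLN.IsFoldAt N' M w) :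
    IMLN.Isom M N := by
  classical
  haveI : Fintype N.V := N.fintypeV
  haveI : Fintype N'.V := N'.fintypeV
  obtain ⟨g, g', hgInj, hg'Inj, hdisj, hcov, hgroot, hgleaf, hgret, hg'leaf, hg'ret,
    v₁, v₂, hv12, harc1, harc2, harcs⟩ := hU
  obtain ⟨hwE2, v, hvw, hvE, hlv, hsubiso, vp, hvpArc, h, hhInj, hhNoReach, hhSurj,
    hhroot, hhleaf, hhret, hhArc⟩ := hF
  have hret : N.IsRet u := hu.1
  have ruu : N.Reaches u u := Relation.ReflTransGen.refl
  -- no cycle through u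
  have cyc : ∀ c : N.V, N.Reaches u c → N.Arc c u → False := fun c hc harc =>
    hN.acyclic u (Relation.TransGen.trans_right hc (Relation.TransGen.single harc))
  -- the parents of u are exactly v₁ and v₂
  have parents : {a : N.V | N.Arc a u} = {v₁, v₂} := by
    have h1 : ({v₁, v₂} : Set N.V) ⊆ {a | N.Arc a u} := by
      intro a ha
      simp only [Set.mem_insert_iff, Set.mem_singleton_iff] at ha
      rcases ha with rfl | rfl
      exacts [harc1, harc2]
    have h2 : {a : N.V | N.Arc a u}.ncard ≤ ({v₁, v₂} : Set N.V).ncard := by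
      rw [Set.ncard_pair hv12]
      exact le_of_eq hret.1
    exact (Set.eq_of_subset_of_ncard_le h1 h2 (Set.toFinite _)).symm
  have parentsIff : ∀ a : N.V, N.Arc a u ↔ (a = v₁ ∨ a = v₂) := by
    intro a
    constructor
    · intro ha
      have : a ∈ ({v₁, v₂} : Set N.V) := parents ▸ ha
      simpa using this
    · rintro (rfl | rfl)
      exacts [harc1, harc2]
  -- no arcs into the root
  have rootNoIn : ∀ p : N.V, ¬ N.Arc p N.root := by
    intro p hp
    have h0 : {q : N.V | N.Arc q N.root} = ∅ :=
      (Set.ncard_eq_zero (Set.toFinite _)).mp hN.rootIn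
    have : p ∈ {q : N.V | N.Arc q N.root} := hp
    rw [h0] at this
    exact this
  -- parents of strict descendants of u are descendants of u
  have P : ∀ a b : N.V, N.Reaches u b → b ≠ u → N.Arc a b → N.Reaches u a := by
    intro a b hb hbu harc
    obtain ⟨c, hc, hcb⟩ : ∃ c, N.Reaches u c ∧ N.Arc c b := by
      rcases Relation.ReflTransGen.cases_tail hb with he | hstep
      · exact absurd he hbu
      · exact hstep
    have hbroot : b ≠ N.root := by
      rintro rfl
      exact rootNoIn c hcb
    have hnret : ¬ N.IsRet b := fun hr => hbu (hu.2 b hr hb)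
    have hin1 : N.inDeg b = 1 := by
      rcases hN.degrees b hbroot with ⟨h1, _⟩ | ⟨h1, h2⟩
      · exact h1
      · exact absurd ⟨h1, h2⟩ hnret
    obtain ⟨p, hp⟩ := Set.ncard_eq_one.mp hin1
    have hap : a ∈ {q : N.V | N.Arc q b} := harc
    have hcp : c ∈ {q : N.V | N.Arc q b} := hcb
    rw [hp, Set.mem_singleton_iff] at hap hcp
    rw [hap, ← hcp]
    exact hc
  -- arc characterizations in N'
  have A1 : ∀ a b : N.V, N'.Arc (g a) (g b) ↔ ((N.Arc a b ∧ b ≠ u) ∨ (a = v₁ ∧ b = u)) := by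
    intro a b
    rw [harcs]
    constructor
    · rintro (⟨a', b', hab, hbu, ha, hb⟩ | ⟨a', b', ha', hb', hab, ha, hb⟩ | ⟨ha, hb⟩ | ⟨ha, hb⟩)
      · obtain rfl := hgInj ha
        obtain rfl := hgInj hb
        exact Or.inl ⟨hab, hbu⟩
      · exact absurd ha (hdisj a a' ha')
      · exact Or.inr ⟨hgInj ha, hgInj hb⟩
      · exact absurd hb (hdisj b u ruu)
    · rintro (⟨hab, hbu⟩ | ⟨rfl, rfl⟩)
      · exact Or.inl ⟨a, b, hab, hbu, rfl, rfl⟩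
      · exact Or.inr (Or.inr (Or.inl ⟨rfl, rfl⟩))
  have A2 : ∀ a b : N.V, N.Reaches u b → (N'.Arc (g a) (g' b) ↔ (a = v₂ ∧ b = u)) := by
    intro a b hb
    rw [harcs]
    constructor
    · rintro (⟨a', b', hab, hbu, ha, hbe⟩ | ⟨a', b', ha', hb', hab, ha, hbe⟩ | ⟨ha, hbe⟩ | ⟨ha, hbe⟩)
      · exact absurd hbe.symm (hdisj b' b hb)
      · exact absurd ha (hdisj a a' ha')
      · exact absurd hbe.symm (hdisj u b hb)
      · exact ⟨hgInj ha, hg'Inj b u hb ruu hbe⟩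
    · rintro ⟨rfl, rfl⟩
      exact Or.inr (Or.inr (Or.inr ⟨rfl, rfl⟩))
  have A3 : ∀ a b : N.V, N.Reaches u a → ¬ N'.Arc (g' a) (g b) := by
    intro a b ha harc
    rw [harcs] at harc
    rcases harc with (⟨a', b', _, _, he, hbe⟩ | ⟨a', b', ha', hb', _, he, hbe⟩ | ⟨he, hbe⟩ | ⟨he, hbe⟩)
    · exact hdisj a' a ha he.symm
    · exact hdisj b b' hb' hbe
    · exact hdisj v₁ a ha he.symm
    · exact hdisj v₂ a ha he.symm
  have A4 : ∀ a b : N.V, N.Reaches u a → N.Reaches u b →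
      (N'.Arc (g' a) (g' b) ↔ N.Arc a b) := by
    intro a b ha hb
    rw [harcs]
    constructor
    · rintro (⟨a', b', _, _, he, _⟩ | ⟨a', b', ha', hb', hab, he, hbe⟩ | ⟨he, _⟩ | ⟨he, _⟩)
      · exact absurd he.symm (hdisj a' a ha)
      · obtain rfl := hg'Inj a a' ha ha' he
        obtain rfl := hg'Inj b b' hb hb' hbe
        exact hab
      · exact absurd he.symm (hdisj v₁ a ha)
      · exact absurd he.symm (hdisj v₂ a ha)
    · intro hab
      exact Or.inr (Or.inl ⟨a, b, ha, hb, hab, rfl, rfl⟩)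
  -- reachability from g' u in N'
  have R1 : ∀ x : N'.V, N'.Reaches (g' u) x ↔ ∃ b, N.Reaches u b ∧ x = g' b := by
    intro x
    constructor
    · intro hx
      have hx' : Relation.ReflTransGen N'.Arc (g' u) x := hx
      clear hx
      induction hx' with
      | refl => exact ⟨u, ruu, rfl⟩
      | tail hsteps harc ih =>
        obtain ⟨b, hb, rfl⟩ := ih
        rw [harcs] at harc
        rcases harc with (⟨a', b', _, _, he, hbe⟩ | ⟨a', b', ha', hb', hab, he, hbe⟩ |
          ⟨he, hbe⟩ | ⟨he, hbe⟩)
        · exact absurd he.symm (hdisj a' b hb)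
        · obtain rfl := hg'Inj b a' hb ha' he
          exact ⟨b', Relation.ReflTransGen.tail hb hab, hbe⟩
        · exact absurd he.symm (hdisj v₁ b hb)
        · exact absurd he.symm (hdisj v₂ b hb)
    · rintro ⟨b, hb, rfl⟩
      have hb' : Relation.ReflTransGen N.Arc u b := hb
      clear hb
      induction hb' with
      | refl => exact Relation.ReflTransGen.refl
      | tail hsteps harc ih =>
        exact Relation.ReflTransGen.tail ih ((harcs _ _).mpr (Or.inr (Or.inl
          ⟨_, _, hsteps, Relation.ReflTransGen.tail hsteps harc, harc, rfl, rfl⟩)))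
  -- reachability from g u in N'
  have R2 : ∀ x : N'.V, N'.Reaches (g u) x ↔ ∃ b, N.Reaches u b ∧ x = g b := by
    intro x
    constructor
    · intro hx
      have hx' : Relation.ReflTransGen N'.Arc (g u) x := hx
      clear hx
      induction hx' with
      | refl => exact ⟨u, ruu, rfl⟩
      | tail hsteps harc ih =>
        obtain ⟨b, hb, rfl⟩ := ih
        rw [harcs] at harc
        rcases harc with (⟨a', b', hab, hbu, he, hbe⟩ | ⟨a', b', ha', hb', hab, he, hbe⟩ |
          ⟨he, hbe⟩ | ⟨he, hbe⟩)
        · obtain rfl := hgInj he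
          exact ⟨b', Relation.ReflTransGen.tail hb hab, hbe⟩
        · exact absurd he (hdisj b a' ha')
        · exact ⟨u, ruu, hbe⟩
        · obtain rfl := hgInj he
          exact (cyc _ hb harc2).elim
    · rintro ⟨b, hb, rfl⟩
      have hb' : Relation.ReflTransGen N.Arc u b := hb
      clear hb
      induction hb' with
      | refl => exact Relation.ReflTransGen.refl
      | @tail c d hsteps harc ih =>
        have hdu : d ≠ u := fun e => cyc c hsteps (e ▸ harc)
        exact Relation.ReflTransGen.tail ih ((harcs _ _).mpr (Or.inl
          ⟨c, d, harc, hdu, rfl, rfl⟩))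
  -- out-degrees are preserved by g
  have outg : ∀ a : N.V, N'.outDeg (g a) = N.outDeg a := by
    intro a
    have key : ∀ F : N.V → N'.V, Set.BijOn F {b | N.Arc a b} {y | N'.Arc (g a) y} →
        N'.outDeg (g a) = N.outDeg a := by
      intro F hbij
      show {y | N'.Arc (g a) y}.ncard = {b | N.Arc a b}.ncard
      rw [← hbij.image_eq]
      exact Set.ncard_image_of_injOn hbij.injOn
    by_cases hau : N.Arc a u
    · rcases (parentsIff a).mp hau with h | h
      · -- a = v₁ : the map g itself works
        obtain rfl := h.symm
        apply key g
        refine ⟨?_, fun b _ b' _ he => hgInj he, ?_⟩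
        · intro b hb
          by_cases hbu : b = u
          · obtain rfl := hbu.symm
            exact (harcs _ _).mpr (Or.inr (Or.inr (Or.inl ⟨rfl, rfl⟩)))
          · exact (A1 _ _).mpr (Or.inl ⟨hb, hbu⟩)
        · intro y hy
          rcases (harcs _ _).mp hy with (⟨a', b', hab, hbu, he, hbe⟩ |
            ⟨a', b', ha', hb', hab, he, hbe⟩ | ⟨he, hbe⟩ | ⟨he, hbe⟩)
          · obtain rfl := hgInj he
            exact ⟨b', hab, hbe.symm⟩
          · exact absurd he (hdisj v₁ a' ha')
          · exact ⟨u, harc1, hbe.symm⟩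
          · exact absurd (hgInj he) hv12
      · -- a = v₂ : redirect u to g' u
        obtain rfl := h.symm
        apply key (Function.update g u (g' u))
        refine ⟨?_, ?_, ?_⟩
        · intro b hb
          by_cases hbu : b = u
          · obtain rfl := hbu.symm
            simp only [Set.mem_setOf_eq, Function.update_self]
            exact (harcs _ _).mpr (Or.inr (Or.inr (Or.inr ⟨rfl, rfl⟩)))
          · simp only [Set.mem_setOf_eq, Function.update_of_ne hbu]
            exact (A1 _ _).mpr (Or.inl ⟨hb, hbu⟩)
        · intro b hb b' hb' he
          by_cases h1 : b = u <;> by_cases h2 : b' = u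
          · rw [h1, h2]
          · obtain rfl := h1.symm
            rw [Function.update_self, Function.update_of_ne h2] at he
            exact absurd he.symm (hdisj b' u ruu)
          · obtain rfl := h2.symm
            rw [Function.update_of_ne h1, Function.update_self] at he
            exact absurd he (hdisj b u ruu)
          · rw [Function.update_of_ne h1, Function.update_of_ne h2] at he
            exact hgInj he
        · intro y hy
          rcases (harcs _ _).mp hy with (⟨a', b', hab, hbu, he, hbe⟩ |
            ⟨a', b', ha', hb', hab, he, hbe⟩ | ⟨he, hbe⟩ | ⟨he, hbe⟩)
          · obtain rfl := hgInj he
            exact ⟨b', hab, by rw [Function.update_of_ne hbu]; exact hbe.symm⟩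
          · exact absurd he (hdisj v₂ a' ha')
          · exact absurd (hgInj he) (Ne.symm hv12)
          · exact ⟨u, harc2, by rw [Function.update_self]; exact hbe.symm⟩
    · -- a is not a parent of u : g itself works
      apply key g
      refine ⟨?_, fun b _ b' _ he => hgInj he, ?_⟩
      · intro b hb
        have hbu : b ≠ u := fun e => hau (e ▸ hb)
        exact (A1 _ _).mpr (Or.inl ⟨hb, hbu⟩)
      · intro y hy
        rcases (harcs _ _).mp hy with (⟨a', b', hab, hbu, he, hbe⟩ |
          ⟨a', b', ha', hb', hab, he, hbe⟩ | ⟨he, hbe⟩ | ⟨he, hbe⟩)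
        · obtain rfl := hgInj he
          exact ⟨b', hab, hbe.symm⟩
        · exact absurd he (hdisj a a' ha')
        · obtain rfl := hgInj he
          exact absurd harc1 hau
        · obtain rfl := hgInj he
          exact absurd harc2 hau
  -- out-degrees are preserved by g'
  have outg' : ∀ a : N.V, N.Reaches u a → N'.outDeg (g' a) = N.outDeg a := by
    intro a ha
    have hbij : Set.BijOn g' {b | N.Arc a b} {y | N'.Arc (g' a) y} := by
      refine ⟨fun b hb => (A4 a b ha (Relation.ReflTransGen.tail ha hb)).mpr hb,
        fun b hb b' hb' he =>
          hg'Inj b b' (Relation.ReflTransGen.tail ha hb) (Relation.ReflTransGen.tail ha hb') he,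
        ?_⟩
      intro y hy
      rcases (harcs _ _).mp hy with (⟨a', b', hab, hbu, he, hbe⟩ |
        ⟨a', b', ha', hb', hab, he, hbe⟩ | ⟨he, hbe⟩ | ⟨he, hbe⟩)
      · exact absurd he.symm (hdisj a' a ha)
      · obtain rfl := hg'Inj a a' ha ha' he
        exact ⟨b', hab, hbe.symm⟩
      · exact absurd he.symm (hdisj v₁ a ha)
      · exact absurd he.symm (hdisj v₂ a ha)
    show {y | N'.Arc (g' a) y}.ncard = {b | N.Arc a b}.ncard
    rw [← hbij.image_eq]
    exact Set.ncard_image_of_injOn hbij.injOn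
  -- classification of elementary nodes of N' labelled like u
  have elemClass : ∀ z : N'.V, N'.IsElem z → N'.retLabel z = N.retLabel u →
      z = g u ∨ z = g' u := by
    intro z hz hlz
    have key : ∀ a : N.V, N.outDeg a = 1 → N.retLabel a = N.retLabel u → a = u := by
      intro a hdeg hlab
      by_cases har : a = N.root
      · exfalso
        have helem : N.IsElem a := ⟨by rw [har, hN.rootIn]; exact Nat.zero_le 1, hdeg⟩
        exact hN.retElemLabels u a hret helem hlab.symm
      · rcases hN.degrees a har with ⟨hin, _⟩ | ⟨hin, hout⟩
        · exact absurd hlab.symm (hN.retElemLabels u a hret ⟨le_of_eq hin, hdeg⟩)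
        · exact (hN.retInj u a hret ⟨hin, hout⟩ hlab.symm).symm
    rcases hcov z with ⟨a, rfl⟩ | ⟨a, ha, rfl⟩
    · left
      have : a = u := key a (by rw [← outg a]; exact hz.2) (by rw [← hgret a]; exact hlz)
      rw [this]
    · right
      have : a = u := key a (by rw [← outg' a ha]; exact hz.2)
        (by rw [← hg'ret a ha]; exact hlz)
      rw [this]
  have hw' : w = g u ∨ w = g' u := elemClass w hw.1 hlw
  have hv' : v = g u ∨ v = g' u := elemClass v hvE.1 (hlv.trans hlw)
  -- the inverse map f
  have hex : ∀ x : M.V, ∃ a : N.V, h x = g a ∨ (N.Reaches u a ∧ h x = g' a) := by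
    intro x
    rcases hcov (h x) with ⟨a, ha⟩ | ⟨a, hra, ha⟩
    exacts [⟨a, Or.inl ha⟩, ⟨a, Or.inr ⟨hra, ha⟩⟩]
  choose f hf using hex
  have funiq : ∀ (x : M.V) (a : N.V),
      (h x = g a ∨ (N.Reaches u a ∧ h x = g' a)) → f x = a := by
    intro x a hA
    rcases hf x with e1 | ⟨r1, e1⟩ <;> rcases hA with e2 | ⟨r2, e2⟩
    · exact hgInj (e1.symm.trans e2)
    · exact absurd (e1.symm.trans e2) (hdisj (f x) a r2)
    · exact absurd (e2.symm.trans e1) (hdisj a (f x) r1)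
    · exact hg'Inj _ _ r1 r2 (e1.symm.trans e2)
  -- labels are preserved
  have hleafEq : ∀ x : M.V, M.leafLabel x = N.leafLabel (f x) := by
    intro x
    rw [hhleaf x]
    rcases hf x with e | ⟨r, e⟩
    · rw [e, hgleaf]
    · rw [e, hg'leaf _ r]
  have hretEq : ∀ x : M.V, M.retLabel x = N.retLabel (f x) := by
    intro x
    rw [hhret x]
    rcases hf x with e | ⟨r, e⟩
    · rw [e, hgret]
    · rw [e, hg'ret _ r]
  -- f is injective
  have finj : Function.Injective f := by
    intro x y hxy
    apply hhInj
    rcases hf x with e1 | ⟨r1, e1⟩ <;> rcases hf y with e2 | ⟨r2, e2⟩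
    · rw [e1, e2, hxy]
    · exfalso
      rcases hv' with hve | hve
      · exact hhNoReach x (by rw [hve, e1, hxy]; exact (R2 _).mpr ⟨f y, r2, rfl⟩)
      · exact hhNoReach y (by rw [hve, e2]; exact (R1 _).mpr ⟨f y, r2, rfl⟩)
    · exfalso
      rcases hv' with hve | hve
      · exact hhNoReach y (by rw [hve, e2, ← hxy]; exact (R2 _).mpr ⟨f x, r1, rfl⟩)
      · exact hhNoReach x (by rw [hve, e1]; exact (R1 _).mpr ⟨f x, r1, rfl⟩)
    · rw [e1, e2, hxy]
  -- f is surjective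
  have fsurj : Function.Surjective f := by
    intro a
    by_cases hra : N'.Reaches v (g a)
    · rcases hv' with hve | hve
      · rw [hve] at hra
        obtain ⟨b, hb, he⟩ := (R2 _).mp hra
        obtain rfl := hgInj he
        have hng : ¬ N'.Reaches v (g' a) := by
          rw [hve]
          intro hc
          obtain ⟨b', hb', he'⟩ := (R2 _).mp hc
          exact hdisj b' a hb he'.symm
        obtain ⟨x, hx⟩ := hhSurj (g' a) hng
        exact ⟨x, funiq x a (Or.inr ⟨hb, hx⟩)⟩
      · rw [hve] at hra
        obtain ⟨b, hb, he⟩ := (R1 _).mp hra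
        exact absurd he (hdisj a b hb)
    · obtain ⟨x, hx⟩ := hhSurj (g a) hra
      exact ⟨x, funiq x a (Or.inl hx)⟩
  -- f preserves arcs
  have harcIff : ∀ x y : M.V, M.Arc x y ↔ N.Arc (f x) (f y) := by
    rcases hv' with hve | hve
    · -- v = g u, hence w = g' u and vp = g v₁
      have hwv : w = g' u := by
        rcases hw' with hwe | hwe
        · exact absurd (hve.trans hwe.symm) hvw
        · exact hwe
      rw [hve] at hvpArc
      have hvp : vp = g v₁ := by
        rcases hcov vp with ⟨c, rfl⟩ | ⟨c, hc, rfl⟩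
        · rcases (A1 c u).mp hvpArc with ⟨_, hne⟩ | ⟨rfl, _⟩
          · exact absurd rfl hne
          · rfl
        · exact absurd hvpArc (A3 c u hc)
      have hnr : ∀ (x : M.V) (a : N.V), h x = g a → ¬ N.Reaches u a := by
        intro x a e hr
        exact hhNoReach x (by rw [hve, e]; exact (R2 _).mpr ⟨a, hr, rfl⟩)
      intro x y
      rw [hhArc, hvp, hwv]
      rcases hf x with e1 | ⟨r1, e1⟩ <;> rcases hf y with e2 | ⟨r2, e2⟩ <;> rw [e1, e2]
      · rw [A1]
        constructor
        · rintro ((⟨hab, _⟩ | ⟨h1, h2⟩) | ⟨h3, h4⟩)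
          · exact hab
          · exact absurd (h2 ▸ ruu) (hnr y (f y) e2)
          · exact absurd h4 (hdisj (f y) u ruu)
        · intro hab
          exact Or.inl (Or.inl ⟨hab, fun hbe => hnr y (f y) e2 (hbe ▸ ruu)⟩)
      · rw [A2 (f x) (f y) r2]
        constructor
        · rintro (⟨h1, h2⟩ | ⟨h3, h4⟩)
          · rw [h1, h2]; exact harc2
          · rw [hgInj h3, hg'Inj _ _ r2 ruu h4]; exact harc1
        · intro hab
          by_cases hyu : f y = u
          · rcases (parentsIff (f x)).mp (hyu ▸ hab) with h1 | h1
            · exact Or.inr ⟨congrArg g h1, congrArg g' hyu⟩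
            · exact Or.inl ⟨h1, hyu⟩
          · exact absurd (P (f x) (f y) r2 hyu hab) (hnr x (f x) e1)
      · constructor
        · rintro (harc | ⟨h3, _⟩)
          · exact absurd harc (A3 _ _ r1)
          · exact absurd h3.symm (hdisj v₁ (f x) r1)
        · intro hab
          exact absurd (Relation.ReflTransGen.tail r1 hab) (hnr y (f y) e2)
      · rw [A4 _ _ r1 r2]
        constructor
        · rintro (hab | ⟨h3, _⟩)
          · exact hab
          · exact absurd h3.symm (hdisj v₁ (f x) r1)
        · exact fun hab => Or.inl hab
    · -- v = g' u, hence w = g u and vp = g v₂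
      have hwv : w = g u := by
        rcases hw' with hwe | hwe
        · exact hwe
        · exact absurd (hve.trans hwe.symm) hvw
      rw [hve] at hvpArc
      have hvp : vp = g v₂ := by
        rcases hcov vp with ⟨c, rfl⟩ | ⟨c, hc, rfl⟩
        · exact congrArg g ((A2 c u ruu).mp hvpArc).1
        · exact (cyc c hc ((A4 c u hc ruu).mp hvpArc)).elim
      have hax : ∀ x : M.V, h x = g (f x) := by
        intro x
        rcases hf x with e | ⟨r, e⟩
        · exact e
        · exact absurd (show N'.Reaches v (h x) from
            by rw [hve, e]; exact (R1 _).mpr ⟨f x, r, rfl⟩) (hhNoReach x)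
      intro x y
      rw [hhArc, hvp, hwv, hax x, hax y, A1]
      constructor
      · rintro ((⟨hab, _⟩ | ⟨h1, h2⟩) | ⟨h3, h4⟩)
        · exact hab
        · rw [h1, h2]; exact harc1
        · rw [hgInj h3, hgInj h4]; exact harc2
      · intro hab
        by_cases hyu : f y = u
        · rcases (parentsIff (f x)).mp (hyu ▸ hab) with h1 | h1
          · exact Or.inl (Or.inr ⟨h1, hyu⟩)
          · exact Or.inr ⟨congrArg g h1, congrArg g hyu⟩
        · exact Or.inl (Or.inl ⟨hab, hyu⟩)
  exact ⟨Equiv.ofBijective f ⟨finj, fsurj⟩, fun x y => harcIff x y,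
    fun x _ => hleafEq x, fun x _ => hretEq x⟩
end
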